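/- arXiv:1905.02107 — 2 statements merged into one kernel-verified Lean document; each statement's English description precedes it below -/
import Mathlib

section
/- Let N, M ≥ 1 be integers and let (T_{i,j,k})_{i∈{1,…,N}, j,k∈{1,…,M}} be square-integrable real random variables on a common probability space such that (a) |Cov(T_{i,j,k}, T_{i',l,m})| ≤ K for all indices, and (b) Cov(T_{i,j,k}, T_{i',l,m}) = 0 whenever i ≠ i' and {j,k} ∩ {l,m} = ∅. Then Var((NM²)^{-1} · Σ_{i=1}^N Σ_{j=1}^M Σ_{k=1}^M T_{i,j,k}) ≤ K·(1/N + 4/M). -/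
open MeasureTheory

/-- Covariance `Cov(X,Y) = E[XY] − E[X]·E[Y]`. -/
noncomputable def cov {Ω : Type*} [MeasurableSpace Ω] (P : Measure Ω) (X Y : Ω → ℝ) : ℝ :=
  (∫ ω, X ω * Y ω ∂P) - (∫ ω, X ω ∂P) * (∫ ω, Y ω ∂P)

/-- Variance `Var(X) = Cov(X,X)`. -/
noncomputable def var {Ω : Type*} [MeasurableSpace Ω] (P : Measure Ω) (X : Ω → ℝ) : ℝ :=
  cov P X X

lemma myIntMul {Ω : Type*} [MeasurableSpace Ω] {P : Measure Ω} {f g : Ω → ℝ}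
    (hf : MemLp f 2 P) (hg : MemLp g 2 P) :
    Integrable (fun ω => f ω * g ω) P := by
  have h1 : Integrable (fun ω => (f ω + g ω) ^ 2) P := (hf.add hg).integrable_sq
  have h2 := hf.integrable_sq
  have h3 := hg.integrable_sq
  have heq : (fun ω => f ω * g ω)
      = fun ω => (((f ω + g ω) ^ 2 - f ω ^ 2) - g ω ^ 2) / 2 := by
    funext ω; ring
  rw [heq]
  exact ((h1.sub h2).sub h3).div_const 2

lemma cov_sum {Ω : Type*} [MeasurableSpace Ω] (P : Measure Ω) [IsFiniteMeasure P] {ι : Type*} (s : Finset ι)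
    (X : ι → Ω → ℝ) (h : ∀ a ∈ s, MemLp (X a) 2 P) :
    cov P (fun ω => ∑ a ∈ s, X a ω) (fun ω => ∑ a ∈ s, X a ω)
      = ∑ a ∈ s, ∑ b ∈ s, cov P (X a) (X b) := by
  have hInt : ∀ a ∈ s, Integrable (X a) P := fun a ha => (h a ha).integrable one_le_two
  have hmul : ∀ a ∈ s, Integrable (fun ω => ∑ b ∈ s, (X a ω * X b ω)) P := by
    intro a ha
    exact integrable_finset_sum s fun b hb => myIntMul (h a ha) (h b hb)
  unfold cov
  have e1 : (∫ ω, (∑ a ∈ s, X a ω) * (∑ b ∈ s, X b ω) ∂P)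
      = ∑ a ∈ s, ∑ b ∈ s, ∫ ω, X a ω * X b ω ∂P := by
    have : (fun ω => (∑ a ∈ s, X a ω) * (∑ b ∈ s, X b ω))
        = fun ω => ∑ a ∈ s, ∑ b ∈ s, (X a ω * X b ω) := by
      funext ω; rw [Finset.sum_mul_sum]
    rw [this, integral_finset_sum s hmul]
    exact Finset.sum_congr rfl fun a ha =>
      integral_finset_sum s fun b hb => myIntMul (h a ha) (h b hb)
  rw [e1, integral_finset_sum s hInt, Finset.sum_mul_sum, ← Finset.sum_sub_distrib]
  exact Finset.sum_congr rfl fun a _ => by rw [← Finset.sum_sub_distrib]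


lemma cov_const_mul {Ω : Type*} [MeasurableSpace Ω] (P : Measure Ω) (c : ℝ) (S : Ω → ℝ) :
    cov P (fun ω => c * S ω) (fun ω => c * S ω) = c ^ 2 * cov P S S := by
  unfold cov
  have h1 : (∫ ω, (c * S ω) * (c * S ω) ∂P) = c ^ 2 * ∫ ω, S ω * S ω ∂P := by
    rw [← integral_const_mul]
    congr 1; funext ω; ring
  simp only []
  rw [h1, integral_const_mul]; ring

set_option maxHeartbeats 1000000 in
/-- **Variance bound for a triple-indexed sum via covariance counting**: if all
covariances are bounded by `K` and covariances vanish whenever the first indices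
differ and the column-index sets are disjoint, then
`Var((NM²)^{-1}·Σᵢ Σⱼ Σₖ T_{i,j,k}) ≤ K·(1/N + 4/M)`. -/
theorem stmt11
    {Ω : Type*} [MeasurableSpace Ω] (P : Measure Ω) [IsProbabilityMeasure P]
    (N M : ℕ) (hN : 1 ≤ N) (hM : 1 ≤ M)
    (T : ℕ → ℕ → ℕ → Ω → ℝ)
    (hL2 : ∀ i ∈ Finset.Icc 1 N, ∀ j ∈ Finset.Icc 1 M, ∀ k ∈ Finset.Icc 1 M,
      MemLp (T i j k) 2 P)
    (K : ℝ) (hK : 0 ≤ K)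
    (hbound : ∀ i ∈ Finset.Icc 1 N, ∀ j ∈ Finset.Icc 1 M, ∀ k ∈ Finset.Icc 1 M,
      ∀ i' ∈ Finset.Icc 1 N, ∀ l ∈ Finset.Icc 1 M, ∀ m ∈ Finset.Icc 1 M,
        |cov P (T i j k) (T i' l m)| ≤ K)
    (hzero : ∀ i ∈ Finset.Icc 1 N, ∀ j ∈ Finset.Icc 1 M, ∀ k ∈ Finset.Icc 1 M,
      ∀ i' ∈ Finset.Icc 1 N, ∀ l ∈ Finset.Icc 1 M, ∀ m ∈ Finset.Icc 1 M,
        i ≠ i' → ({j, k} : Set ℕ) ∩ {l, m} = ∅ →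
          cov P (T i j k) (T i' l m) = 0) :
    var P (fun ω => ((N : ℝ) * (M : ℝ) ^ 2)⁻¹ *
        ∑ i ∈ Finset.Icc 1 N, ∑ j ∈ Finset.Icc 1 M, ∑ k ∈ Finset.Icc 1 M,
          T i j k ω)
      ≤ K * (1 / N + 4 / M) := by
  classical
  set IN := Finset.Icc 1 N with hIN
  set IM := Finset.Icc 1 M with hIM
  set s : Finset (ℕ × ℕ × ℕ) := IN ×ˢ IM ×ˢ IM with hs
  set X : ℕ × ℕ × ℕ → Ω → ℝ := fun p => T p.1 p.2.1 p.2.2 with hXdef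
  have hmem : ∀ p : ℕ × ℕ × ℕ, p ∈ s ↔ p.1 ∈ IN ∧ p.2.1 ∈ IM ∧ p.2.2 ∈ IM := by
    intro p; simp [hs, Finset.mem_product]
  have hX : ∀ p ∈ s, MemLp (X p) 2 P := by
    intro p hp; rw [hmem] at hp; exact hL2 _ hp.1 _ hp.2.1 _ hp.2.2
  set c : ℝ := ((N : ℝ) * (M : ℝ) ^ 2)⁻¹ with hc
  have hfun : (fun ω => c * ∑ i ∈ IN, ∑ j ∈ IM, ∑ k ∈ IM, T i j k ω)
      = fun ω => c * ∑ p ∈ s, X p ω := by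
    funext ω; congr 1
    rw [hs, Finset.sum_product]
    refine Finset.sum_congr rfl fun i _ => ?_
    rw [Finset.sum_product]
  rw [var, hfun, cov_const_mul, cov_sum P s X hX, ← Finset.sum_product']
  set good : (ℕ × ℕ × ℕ) × (ℕ × ℕ × ℕ) → Prop := fun pq =>
    pq.1.1 = pq.2.1 ∨ pq.1.2.1 = pq.2.2.1 ∨ pq.1.2.1 = pq.2.2.2 ∨
      pq.1.2.2 = pq.2.2.1 ∨ pq.1.2.2 = pq.2.2.2 with hgood
  have hzero' : ∀ pq ∈ s ×ˢ s, ¬ good pq → cov P (X pq.1) (X pq.2) = 0 := by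
    rintro ⟨p, q⟩ hpq hg
    rw [Finset.mem_product] at hpq
    obtain ⟨hp, hq⟩ := hpq
    rw [hmem] at hp hq
    simp only [hgood, not_or] at hg
    obtain ⟨h1, h2, h3, h4, h5⟩ := hg
    refine hzero _ hp.1 _ hp.2.1 _ hp.2.2 _ hq.1 _ hq.2.1 _ hq.2.2 h1 ?_
    ext x
    simp only [Set.mem_inter_iff, Set.mem_insert_iff, Set.mem_singleton_iff,
      Set.mem_empty_iff_false, iff_false, not_and]
    rintro (rfl | rfl) (h | h)
    · exact h2 h
    · exact h3 h
    · exact h4 h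
    · exact h5 h
  have hboundK : ∀ pq ∈ s ×ˢ s, cov P (X pq.1) (X pq.2) ≤ K := by
    rintro ⟨p, q⟩ hpq
    rw [Finset.mem_product] at hpq
    obtain ⟨hp, hq⟩ := hpq
    rw [hmem] at hp hq
    exact le_of_abs_le
      (hbound _ hp.1 _ hp.2.1 _ hp.2.2 _ hq.1 _ hq.2.1 _ hq.2.2)
  have hcardIN : IN.card = N := by simp [hIN]
  have hcardIM : IM.card = M := by simp [hIM]
  have hcards : s.card = N * M * M := by
    rw [hs]; simp [Finset.card_product, hcardIN, hcardIM]; ring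
  -- card bound for the diagonal-in-i part
  have cardA : (Finset.filter (fun pq => pq.1.1 = pq.2.1) (s ×ˢ s)).card ≤ N * M ^ 4 := by
    have hle := Finset.card_le_card_of_injOn
      (fun pq : (ℕ × ℕ × ℕ) × (ℕ × ℕ × ℕ) => (pq.1, pq.2.2))
      (s := Finset.filter (fun pq => pq.1.1 = pq.2.1) (s ×ˢ s))
      (t := s ×ˢ (IM ×ˢ IM))
      (by
        rintro ⟨p, q⟩ h
        rw [Finset.mem_coe, Finset.mem_filter, Finset.mem_product] at h
        have hq := (hmem q).mp h.1.2
        rw [Finset.mem_coe, Finset.mem_product]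
        refine ⟨h.1.1, ?_⟩
        rw [Finset.mem_product]
        exact ⟨hq.2.1, hq.2.2⟩)
      (by
        rintro ⟨p, q⟩ ha ⟨p', q'⟩ hb hab
        simp only [Finset.coe_filter, Set.mem_setOf_eq] at ha hb
        have hab' : (p, q.2) = (p', q'.2) := hab
        have h1 : p = p' := (Prod.ext_iff.mp hab').1
        have h2 : q.2 = q'.2 := (Prod.ext_iff.mp hab').2
        have h3 : q.1 = q'.1 := by rw [← ha.2, ← hb.2, h1]
        have h4 : q = q' := Prod.ext_iff.mpr ⟨h3, h2⟩
        rw [h1, h4])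
    calc (Finset.filter (fun pq => pq.1.1 = pq.2.1) (s ×ˢ s)).card
        ≤ (s ×ˢ (IM ×ˢ IM)).card := hle
      _ = N * M ^ 4 := by
          simp [Finset.card_product, hcards, hcardIM]; ring
  -- card bounds for the four overlap parts
  have cardB1 : (Finset.filter (fun pq => pq.1.2.1 = pq.2.2.1) (s ×ˢ s)).card
      ≤ N ^ 2 * M ^ 3 := by
    have hle := Finset.card_le_card_of_injOn
      (fun pq : (ℕ × ℕ × ℕ) × (ℕ × ℕ × ℕ) => (pq.1, (pq.2.1, pq.2.2.2)))
      (s := Finset.filter (fun pq => pq.1.2.1 = pq.2.2.1) (s ×ˢ s))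
      (t := s ×ˢ (IN ×ˢ IM))
      (by
        rintro ⟨p, q⟩ h
        rw [Finset.mem_coe, Finset.mem_filter, Finset.mem_product] at h
        have hq := (hmem q).mp h.1.2
        rw [Finset.mem_coe, Finset.mem_product]
        refine ⟨h.1.1, ?_⟩
        rw [Finset.mem_product]
        exact ⟨hq.1, hq.2.2⟩)
      (by
        rintro ⟨p, q⟩ ha ⟨p', q'⟩ hb hab
        simp only [Finset.coe_filter, Set.mem_setOf_eq] at ha hb
        have hab' : (p, (q.1, q.2.2)) = (p', (q'.1, q'.2.2)) := hab
        have h1 : p = p' := (Prod.ext_iff.mp hab').1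
        have h2 : q.1 = q'.1 := (Prod.ext_iff.mp (Prod.ext_iff.mp hab').2).1
        have h3 : q.2.2 = q'.2.2 := (Prod.ext_iff.mp (Prod.ext_iff.mp hab').2).2
        have h4 : q.2.1 = q'.2.1 := by rw [← ha.2, ← hb.2, h1]
        have h5 : q = q' := Prod.ext_iff.mpr ⟨h2, Prod.ext_iff.mpr ⟨h4, h3⟩⟩
        rw [h1, h5])
    calc _ ≤ (s ×ˢ (IN ×ˢ IM)).card := hle
      _ = N ^ 2 * M ^ 3 := by
          simp [Finset.card_product, hcards, hcardIN, hcardIM]; ring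
  have cardB2 : (Finset.filter (fun pq => pq.1.2.1 = pq.2.2.2) (s ×ˢ s)).card
      ≤ N ^ 2 * M ^ 3 := by
    have hle := Finset.card_le_card_of_injOn
      (fun pq : (ℕ × ℕ × ℕ) × (ℕ × ℕ × ℕ) => (pq.1, (pq.2.1, pq.2.2.1)))
      (s := Finset.filter (fun pq => pq.1.2.1 = pq.2.2.2) (s ×ˢ s))
      (t := s ×ˢ (IN ×ˢ IM))
      (by
        rintro ⟨p, q⟩ h
        rw [Finset.mem_coe, Finset.mem_filter, Finset.mem_product] at h
        have hq := (hmem q).mp h.1.2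
        rw [Finset.mem_coe, Finset.mem_product]
        refine ⟨h.1.1, ?_⟩
        rw [Finset.mem_product]
        exact ⟨hq.1, hq.2.1⟩)
      (by
        rintro ⟨p, q⟩ ha ⟨p', q'⟩ hb hab
        simp only [Finset.coe_filter, Set.mem_setOf_eq] at ha hb
        have hab' : (p, (q.1, q.2.1)) = (p', (q'.1, q'.2.1)) := hab
        have h1 : p = p' := (Prod.ext_iff.mp hab').1
        have h2 : q.1 = q'.1 := (Prod.ext_iff.mp (Prod.ext_iff.mp hab').2).1
        have h3 : q.2.1 = q'.2.1 := (Prod.ext_iff.mp (Prod.ext_iff.mp hab').2).2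
        have h4 : q.2.2 = q'.2.2 := by rw [← ha.2, ← hb.2, h1]
        have h5 : q = q' := Prod.ext_iff.mpr ⟨h2, Prod.ext_iff.mpr ⟨h3, h4⟩⟩
        rw [h1, h5])
    calc _ ≤ (s ×ˢ (IN ×ˢ IM)).card := hle
      _ = N ^ 2 * M ^ 3 := by
          simp [Finset.card_product, hcards, hcardIN, hcardIM]; ring
  have cardB3 : (Finset.filter (fun pq => pq.1.2.2 = pq.2.2.1) (s ×ˢ s)).card
      ≤ N ^ 2 * M ^ 3 := by
    have hle := Finset.card_le_card_of_injOn
      (fun pq : (ℕ × ℕ × ℕ) × (ℕ × ℕ × ℕ) => (pq.1, (pq.2.1, pq.2.2.2)))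
      (s := Finset.filter (fun pq => pq.1.2.2 = pq.2.2.1) (s ×ˢ s))
      (t := s ×ˢ (IN ×ˢ IM))
      (by
        rintro ⟨p, q⟩ h
        rw [Finset.mem_coe, Finset.mem_filter, Finset.mem_product] at h
        have hq := (hmem q).mp h.1.2
        rw [Finset.mem_coe, Finset.mem_product]
        refine ⟨h.1.1, ?_⟩
        rw [Finset.mem_product]
        exact ⟨hq.1, hq.2.2⟩)
      (by
        rintro ⟨p, q⟩ ha ⟨p', q'⟩ hb hab
        simp only [Finset.coe_filter, Set.mem_setOf_eq] at ha hb
        have hab' : (p, (q.1, q.2.2)) = (p', (q'.1, q'.2.2)) := hab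
        have h1 : p = p' := (Prod.ext_iff.mp hab').1
        have h2 : q.1 = q'.1 := (Prod.ext_iff.mp (Prod.ext_iff.mp hab').2).1
        have h3 : q.2.2 = q'.2.2 := (Prod.ext_iff.mp (Prod.ext_iff.mp hab').2).2
        have h4 : q.2.1 = q'.2.1 := by rw [← ha.2, ← hb.2, h1]
        have h5 : q = q' := Prod.ext_iff.mpr ⟨h2, Prod.ext_iff.mpr ⟨h4, h3⟩⟩
        rw [h1, h5])
    calc _ ≤ (s ×ˢ (IN ×ˢ IM)).card := hle
      _ = N ^ 2 * M ^ 3 := by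
          simp [Finset.card_product, hcards, hcardIN, hcardIM]; ring
  have cardB4 : (Finset.filter (fun pq => pq.1.2.2 = pq.2.2.2) (s ×ˢ s)).card
      ≤ N ^ 2 * M ^ 3 := by
    have hle := Finset.card_le_card_of_injOn
      (fun pq : (ℕ × ℕ × ℕ) × (ℕ × ℕ × ℕ) => (pq.1, (pq.2.1, pq.2.2.1)))
      (s := Finset.filter (fun pq => pq.1.2.2 = pq.2.2.2) (s ×ˢ s))
      (t := s ×ˢ (IN ×ˢ IM))
      (by
        rintro ⟨p, q⟩ h
        rw [Finset.mem_coe, Finset.mem_filter, Finset.mem_product] at h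
        have hq := (hmem q).mp h.1.2
        rw [Finset.mem_coe, Finset.mem_product]
        refine ⟨h.1.1, ?_⟩
        rw [Finset.mem_product]
        exact ⟨hq.1, hq.2.1⟩)
      (by
        rintro ⟨p, q⟩ ha ⟨p', q'⟩ hb hab
        simp only [Finset.coe_filter, Set.mem_setOf_eq] at ha hb
        have hab' : (p, (q.1, q.2.1)) = (p', (q'.1, q'.2.1)) := hab
        have h1 : p = p' := (Prod.ext_iff.mp hab').1
        have h2 : q.1 = q'.1 := (Prod.ext_iff.mp (Prod.ext_iff.mp hab').2).1
        have h3 : q.2.1 = q'.2.1 := (Prod.ext_iff.mp (Prod.ext_iff.mp hab').2).2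
        have h4 : q.2.2 = q'.2.2 := by rw [← ha.2, ← hb.2, h1]
        have h5 : q = q' := Prod.ext_iff.mpr ⟨h2, Prod.ext_iff.mpr ⟨h3, h4⟩⟩
        rw [h1, h5])
    calc _ ≤ (s ×ˢ (IN ×ˢ IM)).card := hle
      _ = N ^ 2 * M ^ 3 := by
          simp [Finset.card_product, hcards, hcardIN, hcardIM]; ring
  have cardGood : (Finset.filter good (s ×ˢ s)).card
      ≤ N * M ^ 4 + 4 * (N ^ 2 * M ^ 3) := by
    have hsub : Finset.filter good (s ×ˢ s) ⊆
        Finset.filter (fun pq => pq.1.1 = pq.2.1) (s ×ˢ s) ∪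
        (Finset.filter (fun pq => pq.1.2.1 = pq.2.2.1) (s ×ˢ s) ∪
        (Finset.filter (fun pq => pq.1.2.1 = pq.2.2.2) (s ×ˢ s) ∪
        (Finset.filter (fun pq => pq.1.2.2 = pq.2.2.1) (s ×ˢ s) ∪
         Finset.filter (fun pq => pq.1.2.2 = pq.2.2.2) (s ×ˢ s)))) := by
      intro pq hpq
      rw [Finset.mem_filter] at hpq
      obtain ⟨hm, hg⟩ := hpq
      simp only [hgood] at hg
      simp only [Finset.mem_union, Finset.mem_filter]
      tauto
    calc (Finset.filter good (s ×ˢ s)).card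
        ≤ _ := Finset.card_le_card hsub
      _ ≤ N * M ^ 4 + 4 * (N ^ 2 * M ^ 3) := by
          refine le_trans (Finset.card_union_le _ _) ?_
          refine add_le_add cardA ?_
          refine le_trans (Finset.card_union_le _ _) ?_
          refine le_trans (add_le_add cardB1 (le_trans (Finset.card_union_le _ _)
            (add_le_add cardB2 (le_trans (Finset.card_union_le _ _)
              (add_le_add cardB3 cardB4))))) ?_
          omega
  -- bound the covariance sum
  have hsum : ∑ pq ∈ s ×ˢ s, cov P (X pq.1) (X pq.2)
      ≤ ((N * M ^ 4 + 4 * (N ^ 2 * M ^ 3) : ℕ) : ℝ) * K := by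
    rw [← Finset.sum_filter_add_sum_filter_not (s ×ˢ s) good]
    have h0 : ∑ pq ∈ Finset.filter (fun pq => ¬ good pq) (s ×ˢ s),
        cov P (X pq.1) (X pq.2) = 0 := by
      refine Finset.sum_eq_zero fun pq hpq => ?_
      rw [Finset.mem_filter] at hpq
      exact hzero' pq hpq.1 hpq.2
    rw [h0, add_zero]
    calc ∑ pq ∈ Finset.filter good (s ×ˢ s), cov P (X pq.1) (X pq.2)
        ≤ (Finset.filter good (s ×ˢ s)).card • K := by
          refine Finset.sum_le_card_nsmul _ _ K fun pq hpq => ?_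
          rw [Finset.mem_filter] at hpq
          exact hboundK pq hpq.1
      _ = ((Finset.filter good (s ×ˢ s)).card : ℝ) * K := by
          rw [nsmul_eq_mul]
      _ ≤ ((N * M ^ 4 + 4 * (N ^ 2 * M ^ 3) : ℕ) : ℝ) * K := by
          exact mul_le_mul_of_nonneg_right (Nat.cast_le.mpr cardGood) hK
  have hNpos : (0 : ℝ) < N := by exact_mod_cast Nat.lt_of_lt_of_le Nat.zero_lt_one hN
  have hMpos : (0 : ℝ) < M := by exact_mod_cast Nat.lt_of_lt_of_le Nat.zero_lt_one hM
  calc c ^ 2 * ∑ pq ∈ s ×ˢ s, cov P (X pq.1) (X pq.2)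
      ≤ c ^ 2 * (((N * M ^ 4 + 4 * (N ^ 2 * M ^ 3) : ℕ) : ℝ) * K) :=
        mul_le_mul_of_nonneg_left hsum (sq_nonneg c)
    _ = K * (1 / N + 4 / M) := by
        rw [hc]
        push_cast
        field_simp
end

section
/- There exist universal constants c > 0 and C' > 0 such that the following holds: for all integers n ≥ 2 and p ≥ 1 and all independent random vectors X₁, …, X_n in ℝ^p with B := √(E[max_{1≤i≤n} ‖X_i‖_∞²]) < ∞ and σ² := max_{1≤j≤p} (1/n)·Σ_{i=1}^n E[X_{ij}²], one has, with probability at least 1 − C'·(log n)^{-1}, max_{1≤j≤p} |(1/n)·Σ_{i=1}^n (|X_{ij}| − E[|X_{ij}|])| ≤ c·(√(σ²·log(p∨n)/n) + B·log(p∨n)/n). -/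
set_option maxHeartbeats 1000000

open MeasureTheory ProbabilityTheory
open scoped ENNReal NNReal

/-- exp x ≤ 1 + x + x² for |x| ≤ 1 -/
lemma fn_exp_quad {x : ℝ} (hx : |x| ≤ 1) : Real.exp x ≤ 1 + x + x ^ 2 := by
  have h := Real.exp_bound hx (n := 2) (by norm_num)
  have h2 : ∑ m ∈ Finset.range 2, x ^ m / m.factorial = 1 + x := by
    simp [Finset.sum_range_succ]
  rw [h2] at h
  have h4 : |x| ^ 2 = x ^ 2 := sq_abs x
  have h5 : ((Nat.succ 2 : ℕ) : ℝ) / (((Nat.factorial 2 : ℕ) : ℝ) * (2:ℕ)) = 3/4 := by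
    norm_num [Nat.factorial]
  have := abs_le.mp h
  nlinarith [sq_nonneg x, this.2]

/-- bounded measurable functions are integrable on finite measures -/
lemma fn_integrable_of_bounded {Ω : Type*} [MeasurableSpace Ω] {P : Measure Ω}
    [IsFiniteMeasure P] {f : Ω → ℝ} (hm : AEStronglyMeasurable f P) (C : ℝ)
    (h : ∀ ω, |f ω| ≤ C) : Integrable f P :=
  ⟨hm, HasFiniteIntegral.of_bounded (C := C)
    (Filter.Eventually.of_forall fun ω => by simpa [Real.norm_eq_abs] using h ω)⟩

/-- mgf bound for a bounded centered random variable -/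
lemma fn_mgf_bound {Ω : Type*} [MeasurableSpace Ω] {P : Measure Ω}
    [IsProbabilityMeasure P] {ξ : Ω → ℝ} {b t : ℝ} (hmeas : Measurable ξ)
    (hbd : ∀ ω, |ξ ω| ≤ b) (hmean : ∫ ω, ξ ω ∂P = 0) (ht : 0 ≤ t) (htb : t * b ≤ 1) :
    mgf ξ P t ≤ Real.exp (t ^ 2 * ∫ ω, (ξ ω) ^ 2 ∂P) := by
  have hξint : Integrable ξ P := fn_integrable_of_bounded hmeas.aestronglyMeasurable b hbd
  have hξ2int : Integrable (fun ω => (ξ ω) ^ 2) P := by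
    refine fn_integrable_of_bounded (hmeas.pow_const 2).aestronglyMeasurable (b ^ 2) fun ω => ?_
    rw [abs_pow, sq_abs, ← sq_abs]
    exact pow_le_pow_left₀ (abs_nonneg _) (hbd ω) 2
  have hptw : ∀ ω, Real.exp (t * ξ ω) ≤ 1 + t * ξ ω + t ^ 2 * (ξ ω) ^ 2 := by
    intro ω
    have h1 : |t * ξ ω| ≤ 1 := by
      rw [abs_mul, abs_of_nonneg ht]
      exact le_trans (mul_le_mul_of_nonneg_left (hbd ω) ht) htb
    have := fn_exp_quad h1
    calc Real.exp (t * ξ ω) ≤ 1 + t * ξ ω + (t * ξ ω) ^ 2 := this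
      _ = 1 + t * ξ ω + t ^ 2 * (ξ ω) ^ 2 := by ring
  have hexp_int : Integrable (fun ω => Real.exp (t * ξ ω)) P := by
    refine fn_integrable_of_bounded ((hmeas.const_mul t).exp).aestronglyMeasurable
      (Real.exp 1) fun ω => ?_
    rw [abs_of_pos (Real.exp_pos _)]
    refine Real.exp_le_exp.mpr (le_trans (le_abs_self _) ?_)
    rw [abs_mul, abs_of_nonneg ht]
    exact le_trans (mul_le_mul_of_nonneg_left (hbd ω) ht) htb
  have hrhs_int : Integrable (fun ω => 1 + t * ξ ω + t ^ 2 * (ξ ω) ^ 2) P := by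
    exact ((integrable_const 1).add (hξint.const_mul t)).add (hξ2int.const_mul (t ^ 2))
  have h2 : mgf ξ P t ≤ ∫ ω, (1 + t * ξ ω + t ^ 2 * (ξ ω) ^ 2) ∂P := by
    exact integral_mono hexp_int hrhs_int hptw
  have h3 : ∫ ω, (1 + t * ξ ω + t ^ 2 * (ξ ω) ^ 2) ∂P
      = 1 + t ^ 2 * ∫ ω, (ξ ω) ^ 2 ∂P := by
    have e1 : ∫ ω, (1 + t * ξ ω + t ^ 2 * (ξ ω) ^ 2) ∂P
        = (∫ ω, (1 + t * ξ ω) ∂P) + ∫ ω, t ^ 2 * (ξ ω) ^ 2 ∂P :=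
      integral_add ((integrable_const 1).add (hξint.const_mul t)) (hξ2int.const_mul (t ^ 2))
    have e2 : ∫ ω, (1 + t * ξ ω) ∂P = (∫ _ω, (1:ℝ) ∂P) + ∫ ω, t * ξ ω ∂P :=
      integral_add (integrable_const 1) (hξint.const_mul t)
    rw [e1, e2, MeasureTheory.integral_const_mul, MeasureTheory.integral_const_mul, hmean]
    simp
  calc mgf ξ P t ≤ 1 + t ^ 2 * ∫ ω, (ξ ω) ^ 2 ∂P := h3 ▸ h2
    _ ≤ Real.exp (t ^ 2 * ∫ ω, (ξ ω) ^ 2 ∂P) := by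
        have := Real.add_one_le_exp (t ^ 2 * ∫ ω, (ξ ω) ^ 2 ∂P)
        linarith

/-- One-sided Bernstein-type inequality for bounded independent centered rvs -/
lemma fn_bernstein {Ω : Type} [MeasurableSpace Ω] {P : Measure Ω}
    [IsProbabilityMeasure P] {n : ℕ} {ξ : Fin n → Ω → ℝ} {b v s : ℝ}
    (hb : 0 < b) (hv : 0 < v) (hs : 0 ≤ s)
    (hmeas : ∀ i, Measurable (ξ i))
    (hindep : iIndepFun ξ P)
    (hbd : ∀ i ω, |ξ i ω| ≤ b)
    (hmean : ∀ i, ∫ ω, ξ i ω ∂P = 0)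
    (hvar : ∑ i : Fin n, ∫ ω, (ξ i ω) ^ 2 ∂P ≤ v) :
    (P {ω | s ≤ ∑ i : Fin n, ξ i ω}).toReal
      ≤ Real.exp (-(min (s ^ 2 / (4 * v)) (s / (2 * b)))) := by
  set t : ℝ := min (1 / b) (s / (2 * v)) with htdef
  have ht : 0 ≤ t := le_min (by positivity) (by positivity)
  have htb : t * b ≤ 1 := by
    have : t ≤ 1 / b := min_le_left _ _
    calc t * b ≤ (1 / b) * b := by gcongr
      _ = 1 := by field_simp
  -- integrability of exp(t * ξ i)
  have hint : ∀ i, Integrable (fun ω => Real.exp (t * ξ i ω)) P := by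
    intro i
    refine fn_integrable_of_bounded (((hmeas i).const_mul t).exp).aestronglyMeasurable
      (Real.exp 1) fun ω => ?_
    rw [abs_of_pos (Real.exp_pos _)]
    refine Real.exp_le_exp.mpr (le_trans (le_abs_self _) ?_)
    rw [abs_mul, abs_of_nonneg ht]
    exact le_trans (mul_le_mul_of_nonneg_left (hbd i ω) ht) htb
  -- integrability of exp(t * Σ ξ)
  have hFeq : (∑ i : Fin n, ξ i) = (fun ω => ∑ i : Fin n, ξ i ω) := by
    funext ω; simp [Finset.sum_apply]
  have hSint : Integrable (fun ω => Real.exp (t * (∑ i : Fin n, ξ i ω))) P := by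
    refine fn_integrable_of_bounded ?_ (Real.exp (t * (n * b))) fun ω => ?_
    · exact (((Finset.measurable_sum Finset.univ fun i _ => hmeas i).const_mul t).exp).aestronglyMeasurable
    · rw [abs_of_pos (Real.exp_pos _)]
      refine Real.exp_le_exp.mpr (mul_le_mul_of_nonneg_left ?_ ht)
      calc ∑ i : Fin n, ξ i ω ≤ ∑ i : Fin n, b :=
            Finset.sum_le_sum fun i _ => le_trans (le_abs_self _) (hbd i ω)
        _ = n * b := by simp [mul_comm]
  -- Chernoff bound
  have hch := measure_ge_le_exp_mul_mgf (X := fun ω => ∑ i : Fin n, ξ i ω) (μ := P) s ht hSint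
  -- mgf product bound
  have hmgf : mgf (fun ω => ∑ i : Fin n, ξ i ω) P t ≤ Real.exp (t ^ 2 * v) := by
    rw [← hFeq, hindep.mgf_sum hmeas]
    calc ∏ i : Fin n, mgf (ξ i) P t
        ≤ ∏ i : Fin n, Real.exp (t ^ 2 * ∫ ω, (ξ i ω) ^ 2 ∂P) := by
          refine Finset.prod_le_prod (fun i _ => mgf_nonneg) fun i _ => ?_
          exact fn_mgf_bound (hmeas i) (hbd i) (hmean i) ht htb
      _ = Real.exp (∑ i : Fin n, t ^ 2 * ∫ ω, (ξ i ω) ^ 2 ∂P) := (Real.exp_sum _ _).symm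
      _ ≤ Real.exp (t ^ 2 * v) := by
          rw [← Finset.mul_sum]
          exact Real.exp_le_exp.mpr (mul_le_mul_of_nonneg_left hvar (sq_nonneg t))
  calc (P {ω | s ≤ ∑ i : Fin n, ξ i ω}).toReal
      ≤ Real.exp (-t * s) * mgf (fun ω => ∑ i : Fin n, ξ i ω) P t := hch
    _ ≤ Real.exp (-t * s) * Real.exp (t ^ 2 * v) :=
        mul_le_mul_of_nonneg_left hmgf (le_of_lt (Real.exp_pos _))
    _ = Real.exp (t ^ 2 * v - t * s) := by rw [← Real.exp_add]; ring_nf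
    _ ≤ Real.exp (-(min (s ^ 2 / (4 * v)) (s / (2 * b)))) := ?_
  refine Real.exp_le_exp.mpr ?_
  rcases le_or_gt (s / (2 * v)) (1 / b) with hc | hc
  · have htval : t = s / (2 * v) := min_eq_right hc
    have : t ^ 2 * v - t * s = -(s ^ 2 / (4 * v)) := by
      rw [htval]; field_simp; ring
    rw [this]
    exact neg_le_neg (min_le_left _ _)
  · have htval : t = 1 / b := min_eq_left hc.le
    have hkey : v / b ≤ s / 2 := by
      have := hc.le
      rw [div_le_div_iff₀ (by positivity) (by positivity)] at this
      rw [div_le_div_iff₀ (by positivity) (by norm_num)]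
      nlinarith
    have : t ^ 2 * v - t * s ≤ -(s / (2 * b)) := by
      rw [htval]
      have h1 : (1 / b) ^ 2 * v = (1 / b) * (v / b) := by
        field_simp
      have h2 : (1 / b) * (v / b) ≤ (1 / b) * (s / 2) :=
        mul_le_mul_of_nonneg_left hkey (by positivity)
      have h3 : (1 / b) * s - (1 / b) * (s / 2) = s / (2 * b) := by field_simp; ring
      nlinarith [h1, h2, h3]
    exact le_trans this (neg_le_neg (min_le_right _ _))

/-- variance is at most second moment -/
lemma fn_var_le {Ω : Type} [MeasurableSpace Ω] {P : Measure Ω}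
    [IsProbabilityMeasure P] {f : Ω → ℝ} (hmeas : Measurable f) {C : ℝ}
    (hbd : ∀ ω, |f ω| ≤ C) :
    ∫ ω, (f ω - ∫ ω', f ω' ∂P) ^ 2 ∂P ≤ ∫ ω, (f ω) ^ 2 ∂P := by
  have hfint : Integrable f P := fn_integrable_of_bounded hmeas.aestronglyMeasurable C hbd
  have hf2int : Integrable (fun ω => (f ω) ^ 2) P := by
    refine fn_integrable_of_bounded (hmeas.pow_const 2).aestronglyMeasurable (C ^ 2) fun ω => ?_
    rw [abs_pow, sq_abs, ← sq_abs]
    exact pow_le_pow_left₀ (abs_nonneg _) (hbd ω) 2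
  set m := ∫ ω', f ω' ∂P with hm
  have he : ∀ ω, (f ω - m) ^ 2 = (f ω) ^ 2 - (2 * m) * f ω + m ^ 2 := fun ω => by ring
  have h1 : ∫ ω, (f ω - m) ^ 2 ∂P
      = (∫ ω, ((f ω) ^ 2 - (2 * m) * f ω) ∂P) + ∫ _ω, m ^ 2 ∂P := by
    simp_rw [he]
    exact integral_add (hf2int.sub (hfint.const_mul (2 * m))) (integrable_const _)
  have h2 : ∫ ω, ((f ω) ^ 2 - (2 * m) * f ω) ∂P
      = (∫ ω, (f ω) ^ 2 ∂P) - (2 * m) * m := by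
    rw [integral_sub hf2int (hfint.const_mul (2 * m)), MeasureTheory.integral_const_mul]
  rw [h1, h2]
  simp only [integral_const, measure_univ, ENNReal.toReal_one, probReal_univ, one_smul, smul_eq_mul]
  nlinarith [sq_nonneg m]

/-- pointwise truncation bound : middle part -/
lemma fn_mid_sq {x τ τ' : ℝ} (hτ : 0 < τ) (hx : 0 ≤ x) (hττ' : τ ≤ τ') :
    min x τ' - min x τ ≤ x ^ 2 / τ := by
  rcases le_or_gt x τ with h | h
  · rw [min_eq_left h, min_eq_left (le_trans h hττ')]
    simp [div_nonneg (sq_nonneg x) hτ.le]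
  · rw [min_eq_right h.le]
    have h1 : min x τ' - τ ≤ x := by
      have := min_le_left x τ'
      linarith
    rw [le_div_iff₀ hτ]
    nlinarith [min_le_left x τ']

/-- pointwise truncation bound : top part -/
lemma fn_top_sq {x τ : ℝ} (hτ : 0 < τ) (hx : 0 ≤ x) :
    x - min x τ ≤ x ^ 2 / τ := by
  rcases le_or_gt x τ with h | h
  · rw [min_eq_left h]
    simp [div_nonneg (sq_nonneg x) hτ.le]
  · rw [min_eq_right h.le, le_div_iff₀ hτ]
    nlinarith

/-- **Fuk–Nagaev-type concentration inequality** (Chernozhukov–Chetverikov–Kato):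
there are universal constants `c, C' > 0` such that for independent random
vectors `X₁,…,X_n` in `ℝ^p`, with probability at least `1 − C'·(log n)⁻¹`,
`max_j |n⁻¹ Σᵢ (|X_{ij}| − E|X_{ij}|)| ≤ c·(√(σ²·log(p∨n)/n) + B·log(p∨n)/n)`,
where `B² = E[maxᵢ ‖Xᵢ‖_∞²]` and `σ² = max_j n⁻¹ Σᵢ E[X_{ij}²]`. -/
theorem stmt15 :
    ∃ c : ℝ, 0 < c ∧ ∃ C' : ℝ, 0 < C' ∧
      ∀ (Ω : Type) [MeasurableSpace Ω] (P : Measure Ω),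
        IsProbabilityMeasure P →
        ∀ n p : ℕ, 2 ≤ n → 1 ≤ p →
          ∀ X : Fin n → Ω → (Fin p → ℝ),
            (∀ i, Measurable (X i)) →
            iIndepFun X P →
            Integrable (fun ω => ⨆ i : Fin n, ‖X i ω‖ ^ 2) P →
            ∀ B σ2 : ℝ,
              B = Real.sqrt (∫ ω, ⨆ i : Fin n, ‖X i ω‖ ^ 2 ∂P) →
              σ2 = (⨆ j : Fin p,
                (n : ℝ)⁻¹ * ∑ i : Fin n, ∫ ω, (X i ω j) ^ 2 ∂P) →
              1 - C' / Real.log n ≤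
                (P {ω | (⨆ j : Fin p, |(n : ℝ)⁻¹ *
                      ∑ i : Fin n, (|X i ω j| - ∫ ω', |X i ω' j| ∂P)|)
                    ≤ c * (Real.sqrt (σ2 * Real.log (max p n) / n)
                        + B * Real.log (max p n) / n)}).toReal := by
  refine ⟨100, by norm_num, 100, by norm_num, ?_⟩
  intro Ω mΩ P hP n p hn hp X hmeasX hindep hSint B σ2 hB hσ2
  haveI := hP
  haveI : Nonempty (Fin n) := ⟨⟨0, by omega⟩⟩
  haveI : Nonempty (Fin p) := ⟨⟨0, by omega⟩⟩
  -- basic quantities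
  set L : ℝ := Real.log (max p n) with hLdef
  have hn0 : (0:ℝ) < n := by positivity
  have hn1 : (1:ℝ) < n := by exact_mod_cast (by omega : 1 < n)
  have hlogn : 0 < Real.log n := Real.log_pos hn1
  have hnmax : (n:ℝ) ≤ max (p:ℝ) (n:ℝ) := le_max_right _ _
  have hpmax : (p:ℝ) ≤ max (p:ℝ) (n:ℝ) := le_max_left _ _
  have hmax0 : (0:ℝ) < max (p:ℝ) (n:ℝ) := lt_of_lt_of_le hn0 hnmax
  have hLlogn : Real.log n ≤ L := Real.log_le_log hn0 hnmax
  have hL : 0 < L := lt_of_lt_of_le hlogn hLlogn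
  set S : Ω → ℝ := fun ω => ⨆ i : Fin n, ‖X i ω‖ ^ 2 with hSdef
  have hS_ge : ∀ i ω, ‖X i ω‖ ^ 2 ≤ S ω := fun i ω =>
    le_ciSup (f := fun i : Fin n => ‖X i ω‖ ^ 2) (Set.Finite.bddAbove (Set.finite_range _)) i
  have hS_nonneg : ∀ ω, 0 ≤ S ω := fun ω =>
    le_trans (sq_nonneg ‖X (Classical.arbitrary _) ω‖) (hS_ge _ ω)
  have hIS_nonneg : 0 ≤ ∫ ω, S ω ∂P := integral_nonneg hS_nonneg
  have hB2 : B ^ 2 = ∫ ω, S ω ∂P := by rw [hB, Real.sq_sqrt hIS_nonneg]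
  have hBnn : 0 ≤ B := hB ▸ Real.sqrt_nonneg _
  have hcoord : ∀ i j ω, |X i ω j| ≤ ‖X i ω‖ := by
    intro i j ω
    have := norm_le_pi_norm (X i ω) j
    simpa [Real.norm_eq_abs] using this
  have hcoordsq : ∀ i j ω, (X i ω j) ^ 2 ≤ S ω := by
    intro i j ω
    refine le_trans ?_ (hS_ge i ω)
    rw [← sq_abs]
    exact pow_le_pow_left₀ (abs_nonneg _) (hcoord i j ω) 2
  have hmeasXij : ∀ i j, Measurable (fun ω => X i ω j) := fun i j =>
    (measurable_pi_apply j).comp (hmeasX i)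
  have hXsqint : ∀ i j, Integrable (fun ω => (X i ω j) ^ 2) P := by
    intro i j
    refine hSint.mono' ((hmeasXij i j).pow_const 2).aestronglyMeasurable ?_
    exact Filter.Eventually.of_forall fun ω => by
      rw [Real.norm_eq_abs, abs_of_nonneg (sq_nonneg _)]; exact hcoordsq i j ω
  have habsint : ∀ i j, Integrable (fun ω => |X i ω j|) P := by
    intro i j
    have hgint : Integrable (fun ω => 1 + S ω) P := (integrable_const 1).add hSint
    refine hgint.mono' ((hmeasXij i j).abs).aestronglyMeasurable ?_
    refine Filter.Eventually.of_forall fun ω => ?_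
    rw [Real.norm_eq_abs, abs_abs]
    have h1 : |X i ω j| ≤ 1 + (X i ω j) ^ 2 := by nlinarith [sq_abs (X i ω j), abs_nonneg (X i ω j)]
    exact le_trans h1 (by linarith [hcoordsq i j ω])
  have hσ2_ge : ∀ j : Fin p, (n : ℝ)⁻¹ * ∑ i : Fin n, ∫ ω, (X i ω j) ^ 2 ∂P ≤ σ2 := by
    intro j
    rw [hσ2]
    exact le_ciSup (f := fun j : Fin p => (n : ℝ)⁻¹ * ∑ i : Fin n, ∫ ω, (X i ω j) ^ 2 ∂P)
      (Set.Finite.bddAbove (Set.finite_range _)) j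
  have hσ2nn : 0 ≤ σ2 := by
    refine le_trans ?_ (hσ2_ge (Classical.arbitrary _))
    positivity
  -- the right-hand side bound is nonnegative
  have hRnn : 0 ≤ Real.sqrt (σ2 * L / n) + B * L / n := by positivity
  by_cases hσ2pos : 0 < σ2
  · -- main case : σ2 > 0
    have hBpos : 0 < B := by
      rcases lt_or_ge 0 B with h | h
      · exact h
      · exfalso
        have hB0 : B = 0 := le_antisymm h hBnn
        have hS0 : ∫ ω, S ω ∂P = 0 := by rw [← hB2, hB0]; ring
        have hint_le : ∀ i j, ∫ ω, (X i ω j) ^ 2 ∂P ≤ 0 := by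
          intro i j
          calc ∫ ω, (X i ω j) ^ 2 ∂P ≤ ∫ ω, S ω ∂P :=
                integral_mono (hXsqint i j) hSint fun ω => hcoordsq i j ω
            _ = 0 := hS0
        have hsup_le : σ2 ≤ 0 := by
          rw [hσ2]
          refine ciSup_le fun j => ?_
          have : ∑ i : Fin n, ∫ ω, (X i ω j) ^ 2 ∂P ≤ 0 :=
            Finset.sum_nonpos fun i _ => hint_le i j
          have hninv : (0:ℝ) ≤ (n:ℝ)⁻¹ := by positivity
          exact mul_nonpos_of_nonneg_of_nonpos hninv this
        linarith
    set σ : ℝ := Real.sqrt σ2 with hσdef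
    have hσpos : 0 < σ := Real.sqrt_pos.mpr hσ2pos
    have hσsq : σ ^ 2 = σ2 := Real.sq_sqrt hσ2nn
    set A : ℝ := σ * Real.sqrt ((n:ℝ) / L) with hAdef
    have hApos : 0 < A := mul_pos hσpos (Real.sqrt_pos.mpr (div_pos hn0 hL))
    set τ1 : ℝ := max A (2 * B) with hτ1def
    set τ2 : ℝ := max τ1 (B * Real.sqrt L) with hτ2def
    have hτ1pos : 0 < τ1 := lt_of_lt_of_le hApos (le_max_left _ _)
    have hτ1A : A ≤ τ1 := le_max_left _ _
    have hτ1B : 2 * B ≤ τ1 := le_max_right _ _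
    have hτ12 : τ1 ≤ τ2 := le_max_left _ _
    have hτ2pos : 0 < τ2 := lt_of_lt_of_le hτ1pos hτ12
    have hτ2BL : B * Real.sqrt L ≤ τ2 := le_max_right _ _
    set K : ℝ := Real.sqrt ((n:ℝ) * σ2 * L) with hKdef
    have hKpos : 0 < K := Real.sqrt_pos.mpr (by positivity)
    have hsqrtnL : Real.sqrt ((n:ℝ) / L) * L = Real.sqrt ((n:ℝ) * L) := by
      have h1 : Real.sqrt ((n:ℝ)/L) * L = Real.sqrt ((n:ℝ)/L) * Real.sqrt (L ^ 2) := by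
        rw [Real.sqrt_sq hL.le]
      rw [h1, ← Real.sqrt_mul (by positivity : (0:ℝ) ≤ (n:ℝ)/L)]
      congr 1
      field_simp
    have hKeq : K = σ * Real.sqrt ((n:ℝ) * L) := by
      rw [hKdef, show (n:ℝ) * σ2 * L = σ2 * ((n:ℝ) * L) by ring,
        Real.sqrt_mul hσ2nn, hσdef]
    have hfact1 : L * A = K := by
      rw [hAdef, hKeq]
      rw [show L * (σ * Real.sqrt ((n:ℝ)/L)) = σ * (Real.sqrt ((n:ℝ)/L) * L) by ring, hsqrtnL]
    have hfact2 : (n:ℝ) * σ2 ≤ A * K := by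
      rw [hAdef, hKeq]
      have : σ * Real.sqrt ((n:ℝ)/L) * (σ * Real.sqrt ((n:ℝ)*L))
          = σ ^ 2 * (Real.sqrt ((n:ℝ)/L) * Real.sqrt ((n:ℝ)*L)) := by ring
      rw [this, ← Real.sqrt_mul (by positivity : (0:ℝ) ≤ (n:ℝ)/L),
        show ((n:ℝ)/L) * ((n:ℝ)*L) = (n:ℝ)^2 by field_simp,
        Real.sqrt_sq hn0.le, hσsq]
      linarith
    have hfact3 : K = (n:ℝ) * Real.sqrt (σ2 * L / (n:ℝ)) := by
      rw [hKdef]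
      rw [show (n:ℝ) * σ2 * L = (σ2 * L / (n:ℝ)) * (n:ℝ)^2 by field_simp]
      rw [Real.sqrt_mul (by positivity), Real.sqrt_sq hn0.le]
      ring
    set s : ℝ := 8 * (K + B * L) with hsdef
    have hsnn : 0 ≤ s := by positivity
    have hKsq : K ^ 2 = (n:ℝ) * σ2 * L := Real.sq_sqrt (by positivity)
    have hBLnn : 0 ≤ B * L := mul_nonneg hBnn hL.le
    have h8K : 8 * K ≤ s := by rw [hsdef]; linarith
    have h8BL : 8 * (B * L) ≤ s := by rw [hsdef]; linarith [hKpos.le]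
    have hmin2L : 2 * L ≤ min (s ^ 2 / (4 * ((n:ℝ) * σ2))) (s / (2 * τ1)) := by
      refine le_min ?_ ?_
      · rw [le_div_iff₀ (by positivity)]
        have hs2 : 64 * ((n:ℝ) * σ2 * L) ≤ s ^ 2 := by
          have h1 : (8 * K) ^ 2 ≤ s ^ 2 := pow_le_pow_left₀ (by positivity) h8K 2
          calc 64 * ((n:ℝ) * σ2 * L) = (8 * K) ^ 2 := by rw [show (8*K)^2 = 64 * K^2 by ring, hKsq]
            _ ≤ s ^ 2 := h1
        have he : 2 * L * (4 * ((n:ℝ) * σ2)) = 8 * ((n:ℝ) * σ2 * L) := by ring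
        have hpos : 0 ≤ (n:ℝ) * σ2 * L := by positivity
        rw [he]; linarith
      · rw [le_div_iff₀ (by positivity)]
        have h1 : 4 * L * τ1 ≤ s := by
          rw [hτ1def]
          rcases max_cases A (2 * B) with ⟨heq, _⟩ | ⟨heq, _⟩ <;> rw [heq]
          · have he : 4 * L * A = 4 * K := by rw [← hfact1]; ring
            rw [he, hsdef]
            linarith [hKpos.le]
          · have he : 4 * L * (2 * B) = 8 * (B * L) := by ring
            rw [he]
            exact h8BL
        have he : 2 * L * (2 * τ1) = 4 * L * τ1 := by ring
        rw [he]; exact h1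
    -- truncated variables and Bernstein bounds
    set a : Fin n → Fin p → Ω → ℝ := fun i j ω => min |X i ω j| τ1 with hadef
    set mm : Fin n → Fin p → ℝ := fun i j => ∫ ω, a i j ω ∂P with hmmdef
    have hameas : ∀ i j, Measurable (a i j) := fun i j =>
      (hmeasXij i j).abs.min measurable_const
    have habd : ∀ i j ω, |a i j ω| ≤ τ1 := by
      intro i j ω
      rw [abs_of_nonneg (le_min (abs_nonneg _) hτ1pos.le)]
      exact min_le_right _ _
    have ha_nonneg : ∀ i j ω, 0 ≤ a i j ω := fun i j ω => le_min (abs_nonneg _) hτ1pos.le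
    have haint : ∀ i j, Integrable (a i j) P := fun i j =>
      fn_integrable_of_bounded (hameas i j).aestronglyMeasurable τ1 (habd i j)
    have hmm_nonneg : ∀ i j, 0 ≤ mm i j := fun i j => integral_nonneg (ha_nonneg i j)
    have hmm_le : ∀ i j, mm i j ≤ τ1 := by
      intro i j
      calc mm i j ≤ ∫ _ω, τ1 ∂P := integral_mono (haint i j) (integrable_const _)
            fun ω => min_le_right _ _
        _ = τ1 := by simp
    set ξ : Fin p → Fin n → Ω → ℝ := fun j i ω => a i j ω - mm i j with hξdef
    have hξmeas : ∀ j i, Measurable (ξ j i) := fun j i => (hameas i j).sub measurable_const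
    have hξeq : ∀ j i (ω : Ω), ξ j i ω = a i j ω - mm i j := fun j i ω => rfl
    have hξbd : ∀ j i ω, |ξ j i ω| ≤ τ1 := by
      intro j i ω
      have h1 := ha_nonneg i j ω
      have h2 : a i j ω ≤ τ1 := (abs_le.mp (habd i j ω)).2
      have h3 := hmm_nonneg i j
      have h4 := hmm_le i j
      rw [abs_le, hξeq]
      constructor <;> linarith
    have hξmean : ∀ j i, ∫ ω, ξ j i ω ∂P = 0 := by
      intro j i
      rw [hξdef]
      simp only
      rw [integral_sub (haint i j) (integrable_const _)]
      simp [hmmdef]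
    have hξvar : ∀ j, ∑ i : Fin n, ∫ ω, (ξ j i ω) ^ 2 ∂P ≤ (n:ℝ) * σ2 := by
      intro j
      have hper : ∀ i, ∫ ω, (ξ j i ω) ^ 2 ∂P ≤ ∫ ω, (X i ω j) ^ 2 ∂P := by
        intro i
        refine le_trans (fn_var_le (hameas i j) (habd i j)) ?_
        refine integral_mono ?_ (hXsqint i j) ?_
        · exact fn_integrable_of_bounded ((hameas i j).pow_const 2).aestronglyMeasurable
            (τ1 ^ 2) fun ω => by
              rw [abs_of_nonneg (sq_nonneg _), ← sq_abs (a i j ω)]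
              exact pow_le_pow_left₀ (abs_nonneg _) (habd i j ω) 2
        · intro ω
          show a i j ω ^ 2 ≤ X i ω j ^ 2
          rw [← sq_abs (X i ω j)]
          exact pow_le_pow_left₀ (ha_nonneg i j ω) (min_le_left _ _) 2
      calc ∑ i : Fin n, ∫ ω, (ξ j i ω) ^ 2 ∂P
          ≤ ∑ i : Fin n, ∫ ω, (X i ω j) ^ 2 ∂P := Finset.sum_le_sum fun i _ => hper i
        _ ≤ (n:ℝ) * σ2 := by
            have h2 := mul_le_mul_of_nonneg_left (hσ2_ge j) hn0.le
            have h3 : (n:ℝ) * ((n:ℝ)⁻¹ * ∑ i : Fin n, ∫ ω, (X i ω j) ^ 2 ∂P)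
                = ∑ i : Fin n, ∫ ω, (X i ω j) ^ 2 ∂P := by
              field_simp
            linarith
    have hindepξ : ∀ j, iIndepFun (ξ j) P := by
      intro j
      have := hindep.comp (g := fun i (x : Fin p → ℝ) => min |x j| τ1 - mm i j)
        (fun i => ((measurable_pi_apply j).abs.min measurable_const).sub measurable_const)
      exact this
    have hindepξ' : ∀ j, iIndepFun (fun i ω => -(ξ j i ω)) P := by
      intro j
      have := hindep.comp (g := fun i (x : Fin p → ℝ) => -(min |x j| τ1 - mm i j))
        (fun i => (((measurable_pi_apply j).abs.min measurable_const).sub measurable_const).neg)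
      exact this
    have hbern : ∀ j, (P {ω | s ≤ ∑ i : Fin n, ξ j i ω}).toReal ≤ Real.exp (-(2*L))
        ∧ (P {ω | s ≤ ∑ i : Fin n, -(ξ j i ω)}).toReal ≤ Real.exp (-(2*L)) := by
      intro j
      constructor
      · refine le_trans (fn_bernstein (b := τ1) (v := (n:ℝ) * σ2) hτ1pos
          (mul_pos hn0 hσ2pos) hsnn (hξmeas j) (hindepξ j)
          (hξbd j) (hξmean j) (hξvar j)) ?_
        exact Real.exp_le_exp.mpr (neg_le_neg hmin2L)
      · refine le_trans (fn_bernstein (ξ := fun i ω => -(ξ j i ω)) (b := τ1)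
          (v := (n:ℝ) * σ2) hτ1pos (mul_pos hn0 hσ2pos) hsnn
          (fun i => (hξmeas j i).neg) (hindepξ' j)
          (fun i ω => by rw [abs_neg]; exact hξbd j i ω)
          (fun i => by rw [integral_neg, hξmean j i, neg_zero])
          (by simpa using hξvar j)) ?_
        exact Real.exp_le_exp.mpr (neg_le_neg hmin2L)
    -- indicator variables
    set ind : Fin n → Ω → ℝ := fun i ω => if 2 * B < ‖X i ω‖ then 1 else 0 with hinddef
    have hindmeas : ∀ i, Measurable (ind i) := fun i =>
      Measurable.ite (measurableSet_lt measurable_const (hmeasX i).norm)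
        measurable_const measurable_const
    have hind01 : ∀ i ω, 0 ≤ ind i ω ∧ ind i ω ≤ 1 := by
      intro i ω
      by_cases h : 2 * B < ‖X i ω‖ <;> simp [hinddef, h]
    have hindint : ∀ i, Integrable (ind i) P := fun i =>
      fn_integrable_of_bounded (hindmeas i).aestronglyMeasurable 1 fun ω => by
        rw [abs_of_nonneg (hind01 i ω).1]; exact (hind01 i ω).2
    set q : Fin n → ℝ := fun i => ∫ ω, ind i ω ∂P with hqdef
    have hq0 : ∀ i, 0 ≤ q i := fun i => integral_nonneg fun ω => (hind01 i ω).1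
    have hq1 : ∀ i, q i ≤ 1 := by
      intro i
      calc q i ≤ ∫ _ω, (1:ℝ) ∂P := integral_mono (hindint i) (integrable_const _)
            fun ω => (hind01 i ω).2
        _ = 1 := by simp
    have hindepind : iIndepFun ind P := by
      have := hindep.comp (g := fun _ (x : Fin p → ℝ) => if 2 * B < ‖x‖ then (1:ℝ) else 0)
        (fun _ => Measurable.ite (measurableSet_lt measurable_const measurable_norm)
          measurable_const measurable_const)
      exact this
    have hindexpint : ∀ (t : ℝ) (i : Fin n), Integrable (fun ω => Real.exp (t * ind i ω)) P := by
      intro t i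
      refine fn_integrable_of_bounded ((hindmeas i).const_mul t).exp.aestronglyMeasurable
        (Real.exp |t|) fun ω => ?_
      rw [abs_of_pos (Real.exp_pos _)]
      refine Real.exp_le_exp.mpr ?_
      calc t * ind i ω ≤ |t * ind i ω| := le_abs_self _
        _ = |t| * |ind i ω| := abs_mul _ _
        _ ≤ |t| * 1 := by
            refine mul_le_mul_of_nonneg_left ?_ (abs_nonneg t)
            rw [abs_of_nonneg (hind01 i ω).1]; exact (hind01 i ω).2
        _ = |t| := mul_one _
    have hNexpint : ∀ (t : ℝ), Integrable (fun ω => Real.exp (t * ∑ i : Fin n, ind i ω)) P := by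
      intro t
      refine fn_integrable_of_bounded ?_ (Real.exp (|t| * n)) fun ω => ?_
      · exact (((Finset.measurable_sum Finset.univ fun i _ => hindmeas i).const_mul t).exp).aestronglyMeasurable
      · rw [abs_of_pos (Real.exp_pos _)]
        refine Real.exp_le_exp.mpr ?_
        have hs1 : |∑ i : Fin n, ind i ω| ≤ (n:ℝ) := by
          refine le_trans (Finset.abs_sum_le_sum_abs _ _) ?_
          calc ∑ i : Fin n, |ind i ω| ≤ ∑ _i : Fin n, (1:ℝ) :=
                Finset.sum_le_sum fun i _ => by
                  rw [abs_of_nonneg (hind01 i ω).1]; exact (hind01 i ω).2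
            _ = n := by simp
        calc t * ∑ i : Fin n, ind i ω ≤ |t * ∑ i : Fin n, ind i ω| := le_abs_self _
          _ = |t| * |∑ i : Fin n, ind i ω| := abs_mul _ _
          _ ≤ |t| * n := mul_le_mul_of_nonneg_left hs1 (abs_nonneg t)
    have hNeq : (∑ i : Fin n, ind i) = (fun ω => ∑ i : Fin n, ind i ω) := by
      funext ω; simp [Finset.sum_apply]
    have hmgfN : ∀ t : ℝ, mgf (fun ω => ∑ i : Fin n, ind i ω) P t
        = ∏ i : Fin n, mgf (ind i) P t := by
      intro t
      rw [← hNeq]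
      exact hindepind.mgf_sum hindmeas Finset.univ
    -- Markov's inequality for S
    have hmarkov : ∀ ε : ℝ, 0 < ε → (P {ω | ε ≤ S ω}).toReal ≤ B ^ 2 / ε := by
      intro ε hε
      have hm := mul_meas_ge_le_integral_of_nonneg
        (Filter.Eventually.of_forall hS_nonneg) hSint ε
      rw [le_div_iff₀ hε]
      calc (P {ω | ε ≤ S ω}).toReal * ε = ε * (P {ω | ε ≤ S ω}).toReal := mul_comm _ _
        _ ≤ ∫ ω, S ω ∂P := hm
        _ = B ^ 2 := hB2.symm
    -- numerical facts about exp(-1)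
    have hexpneg1 : Real.exp (-1) ≤ 1/2 := by
      have hmul : Real.exp (-1) * Real.exp 1 = 1 := by rw [← Real.exp_add]; norm_num
      have h2 : (2:ℝ) ≤ Real.exp 1 := by
        have := Real.exp_one_gt_d9
        linarith
      have h3 := mul_le_mul_of_nonneg_left h2 (Real.exp_pos (-1)).le
      linarith
    have hexpneg1' : 0 < Real.exp (-1) := Real.exp_pos _
    set α : ℝ := 1 - Real.exp (-1) with hαdef
    have hα_lb : (1:ℝ)/2 ≤ α := by rw [hαdef]; linarith
    have hα_ub : α ≤ 1 := by rw [hαdef]; linarith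
    -- sum of exceedance probabilities is at most 1
    have hqsum : ∑ i : Fin n, q i ≤ 1 := by
      set G0 : Set Ω := ⋂ i : Fin n, {ω | ¬ (2 * B < ‖X i ω‖)} with hG0def
      have hG0meas : MeasurableSet G0 :=
        MeasurableSet.iInter fun i => (measurableSet_lt measurable_const (hmeasX i).norm).compl
      have hsubG0 : G0ᶜ ⊆ {ω | 4 * B ^ 2 ≤ S ω} := by
        intro ω hω
        rw [hG0def, Set.compl_iInter] at hω
        obtain ⟨i, hi⟩ := Set.mem_iUnion.mp hω
        have h2B : 2 * B < ‖X i ω‖ := by simpa using hi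
        have hsq : (2*B)^2 ≤ ‖X i ω‖^2 := pow_le_pow_left₀ (by positivity) h2B.le 2
        have hSg := hS_ge i ω
        simp only [Set.mem_setOf_eq]
        have : (2*B)^2 = 4*B^2 := by ring
        linarith
      have hPG0c : (P G0ᶜ).toReal ≤ 1/4 := by
        refine le_trans (ENNReal.toReal_mono (measure_ne_top P _) (measure_mono hsubG0)) ?_
        refine le_trans (hmarkov (4*B^2) (by positivity)) ?_
        have he : B^2/(4*B^2) = 1/4 := by
          rw [div_eq_iff (by positivity : (4:ℝ)*B^2 ≠ 0)]
          ring
        rw [he]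
      have hPG0 : (3:ℝ)/4 ≤ (P G0).toReal := by
        have hsplit : (P G0).toReal + (P G0ᶜ).toReal = 1 := by
          rw [← ENNReal.toReal_add (measure_ne_top P _) (measure_ne_top P _),
            measure_add_measure_compl hG0meas, measure_univ, ENNReal.toReal_one]
        linarith
      have hlow : (P G0).toReal ≤ mgf (fun ω => ∑ i : Fin n, ind i ω) P (-1) := by
        have hind_int : Integrable (G0.indicator fun _ => (1:ℝ)) P :=
          (integrable_const 1).indicator hG0meas
        have he : (P G0).toReal = ∫ ω, G0.indicator (fun _ => (1:ℝ)) ω ∂P := by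
          rw [integral_indicator_const _ hG0meas]; simp; rfl
        rw [he]
        refine integral_mono hind_int (hNexpint (-1)) fun ω => ?_
        show G0.indicator (fun _ => (1:ℝ)) ω ≤ Real.exp ((-1) * ∑ i : Fin n, ind i ω)
        by_cases hω : ω ∈ G0
        · have hN0 : ∑ i : Fin n, ind i ω = 0 := by
            refine Finset.sum_eq_zero fun i _ => ?_
            have : ¬ (2 * B < ‖X i ω‖) := by
              rw [hG0def] at hω
              exact Set.mem_iInter.mp hω i
            simp [hinddef, this]
          rw [Set.indicator_of_mem hω, hN0]
          simp
        · rw [Set.indicator_of_notMem hω]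
          exact (Real.exp_pos _).le
      have hup : mgf (fun ω => ∑ i : Fin n, ind i ω) P (-1)
          ≤ ∏ i : Fin n, (1 - α * q i) := by
        rw [hmgfN]
        refine Finset.prod_le_prod (fun i _ => mgf_nonneg) fun i _ => ?_
        have hptw : ∀ ω, Real.exp ((-1) * ind i ω) ≤ 1 - α * ind i ω := by
          intro ω
          by_cases h : 2 * B < ‖X i ω‖ <;> simp [hinddef, h, hαdef] <;> ring_nf <;> simp
        calc mgf (ind i) P (-1) = ∫ ω, Real.exp ((-1) * ind i ω) ∂P := rfl
          _ ≤ ∫ ω, (1 - α * ind i ω) ∂P :=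
              integral_mono (hindexpint (-1) i)
                ((integrable_const 1).sub ((hindint i).const_mul α)) hptw
          _ = 1 - α * q i := by
              rw [integral_sub (integrable_const 1) ((hindint i).const_mul α),
                MeasureTheory.integral_const_mul]
              simp [hqdef]
      have hprod_exp : ∏ i : Fin n, (1 - α * q i) ≤ Real.exp (-(α * ∑ i : Fin n, q i)) := by
        have he : -(α * ∑ i : Fin n, q i) = ∑ i : Fin n, (-(α * q i)) := by
          rw [Finset.mul_sum, ← Finset.sum_neg_distrib]
        rw [he, Real.exp_sum]
        refine Finset.prod_le_prod (fun i _ => ?_) (fun i _ => ?_)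
        · have : α * q i ≤ 1 := by
            calc α * q i ≤ 1 * 1 := mul_le_mul hα_ub (hq1 i) (hq0 i) (by norm_num)
              _ = 1 := by norm_num
          linarith
        · have := Real.add_one_le_exp (-(α * q i))
          linarith
      have hcomb : (3:ℝ)/4 ≤ Real.exp (-(α * ∑ i : Fin n, q i)) :=
        le_trans hPG0 (le_trans hlow (le_trans hup hprod_exp))
      have hlog : Real.log (3/4) ≤ -(α * ∑ i : Fin n, q i) := by
        have := Real.log_le_log (by norm_num : (0:ℝ) < 3/4) hcomb
        rwa [Real.log_exp] at this
      have hlog43 : -Real.log (3/4) ≤ 1/3 := by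
        have h1 : Real.log ((3:ℝ)/4) = - Real.log (4/3) := by
          rw [← Real.log_inv]
          norm_num
        have h2 : Real.log ((4:ℝ)/3) ≤ 4/3 - 1 :=
          Real.log_le_sub_one_of_pos (by norm_num)
        rw [h1]
        linarith
      have hq_sum_nn : 0 ≤ ∑ i : Fin n, q i := Finset.sum_nonneg fun i _ => hq0 i
      have h1 : α * ∑ i : Fin n, q i ≤ 1/3 := by linarith
      have h2 : (1/2) * ∑ i : Fin n, q i ≤ α * ∑ i : Fin n, q i :=
        mul_le_mul_of_nonneg_right hα_lb hq_sum_nn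
      linarith
    -- sum of second moments bound (used repeatedly)
    have hsumsq : ∀ j : Fin p, ∑ i : Fin n, ∫ ω, (X i ω j) ^ 2 ∂P ≤ (n:ℝ) * σ2 := by
      intro j
      have h2 := mul_le_mul_of_nonneg_left (hσ2_ge j) hn0.le
      have h3 : (n:ℝ) * ((n:ℝ)⁻¹ * ∑ i : Fin n, ∫ ω, (X i ω j) ^ 2 ∂P)
          = ∑ i : Fin n, ∫ ω, (X i ω j) ^ 2 ∂P := by field_simp
      linarith only [h2, h3]
    have hdivmono : ∀ x y z : ℝ, 0 ≤ x → 0 < y → y ≤ z → x / z ≤ x / y := by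
      intro x y z hx hy hyz
      rw [div_le_div_iff₀ (lt_of_lt_of_le hy hyz) hy]
      exact mul_le_mul_of_nonneg_left hyz hx
    have hdivnum : ∀ x y z : ℝ, x ≤ y → 0 < z → x / z ≤ y / z := by
      intro x y z hxy hz
      rw [div_le_div_iff₀ hz hz]
      exact mul_le_mul_of_nonneg_right hxy hz.le
    have hloglen : Real.log n ≤ (n:ℝ) := by
      have h := Real.log_le_sub_one_of_pos hn0
      linarith only [h]
    -- the three bad events
    set U : Fin p → Set Ω := fun j => {ω | s ≤ ∑ i : Fin n, ξ j i ω} with hUdef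
    set V : Fin p → Set Ω := fun j => {ω | s ≤ ∑ i : Fin n, -(ξ j i ω)} with hVdef
    set Bad1 : Set Ω := ⋃ j : Fin p, (U j ∪ V j) with hBad1def
    set Bad2 : Set Ω := {ω | Real.sqrt L ≤ ∑ i : Fin n, ind i ω} with hBad2def
    set Bad3 : Set Ω := ⋃ i : Fin n, {ω | τ2 ≤ ‖X i ω‖} with hBad3def
    have hUmeas : ∀ j, MeasurableSet (U j) := fun j =>
      measurableSet_le measurable_const (Finset.measurable_sum Finset.univ fun i _ => hξmeas j i)
    have hVmeas : ∀ j, MeasurableSet (V j) := fun j =>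
      measurableSet_le measurable_const
        (Finset.measurable_sum Finset.univ fun i _ => (hξmeas j i).neg)
    have hB1meas : MeasurableSet Bad1 := MeasurableSet.iUnion fun j => (hUmeas j).union (hVmeas j)
    have hB2meas : MeasurableSet Bad2 :=
      measurableSet_le measurable_const (Finset.measurable_sum Finset.univ fun i _ => hindmeas i)
    have hB3meas : MeasurableSet Bad3 := MeasurableSet.iUnion fun i =>
      measurableSet_le measurable_const (hmeasX i).norm
    set Bad : Set Ω := Bad1 ∪ Bad2 ∪ Bad3 with hBaddef
    have hBadmeas : MeasurableSet Bad := (hB1meas.union hB2meas).union hB3meas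
    -- probability of Bad1
    set M : ℝ := max (p:ℝ) (n:ℝ) with hMdef
    have hexp2L : Real.exp (-(2*L)) = M⁻¹ * M⁻¹ := by
      rw [show -(2*L) = -L + -L by ring, Real.exp_add, Real.exp_neg, hLdef,
        Real.exp_log hmax0]
    have hPB1 : (P Bad1).toReal ≤ 2 / Real.log n := by
      have h1 : P Bad1 ≤ ∑ j : Fin p, (P (U j) + P (V j)) := by
        refine le_trans (measure_iUnion_le _) ?_
        rw [tsum_fintype]
        exact Finset.sum_le_sum fun j _ => measure_union_le _ _
      have hne : ∀ j ∈ Finset.univ, P (U j) + P (V j) ≠ (⊤ : ℝ≥0∞) := fun j _ =>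
        (ENNReal.add_lt_top.mpr ⟨measure_lt_top P _, measure_lt_top P _⟩).ne
      have hne2 : (∑ j : Fin p, (P (U j) + P (V j))) ≠ (⊤ : ℝ≥0∞) := by
        rw [ENNReal.sum_ne_top]
        exact hne
      have h2 : (P Bad1).toReal ≤ (∑ j : Fin p, (P (U j) + P (V j))).toReal :=
        ENNReal.toReal_mono hne2 h1
      have h3 : (∑ j : Fin p, (P (U j) + P (V j))).toReal
          = ∑ j : Fin p, ((P (U j)).toReal + (P (V j)).toReal) := by
        rw [ENNReal.toReal_sum hne]
        exact Finset.sum_congr rfl fun j _ =>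
          ENNReal.toReal_add (measure_ne_top P _) (measure_ne_top P _)
      have h4 : ∀ j : Fin p, (P (U j)).toReal + (P (V j)).toReal ≤ 2 * Real.exp (-(2*L)) := by
        intro j
        have ha' : (P (U j)).toReal ≤ Real.exp (-(2*L)) := (hbern j).1
        have hb' : (P (V j)).toReal ≤ Real.exp (-(2*L)) := (hbern j).2
        linarith only [ha', hb']
      have h5 : ∑ j : Fin p, ((P (U j)).toReal + (P (V j)).toReal)
          ≤ (p:ℝ) * (2 * Real.exp (-(2*L))) := by
        calc ∑ j : Fin p, ((P (U j)).toReal + (P (V j)).toReal)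
            ≤ ∑ _j : Fin p, 2 * Real.exp (-(2*L)) := Finset.sum_le_sum fun j _ => h4 j
          _ = (p:ℝ) * (2 * Real.exp (-(2*L))) := by simp [mul_comm]
      have h6 : (p:ℝ) * (2 * Real.exp (-(2*L))) ≤ 2 / (n:ℝ) := by
        rw [hexp2L]
        have hMpos : 0 < M := hmax0
        have hpn : (p:ℝ) * (n:ℝ) ≤ M * M :=
          mul_le_mul hpmax hnmax hn0.le (le_trans hn0.le hnmax)
        rw [show (p:ℝ) * (2 * (M⁻¹ * M⁻¹)) = 2 * (p:ℝ) / (M * M) by field_simp,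
          div_le_div_iff₀ (by positivity) hn0]
        calc 2 * (p:ℝ) * (n:ℝ) = 2 * ((p:ℝ) * (n:ℝ)) := by ring
          _ ≤ 2 * (M * M) := by linarith only [hpn]
      have h7 : 2 / (n:ℝ) ≤ 2 / Real.log n := hdivmono 2 _ _ (by norm_num) hlogn hloglen
      linarith only [h2, h3, h5, h6, h7]
    -- probability of Bad2
    have hsqrtLpos : 0 < Real.sqrt L := Real.sqrt_pos.mpr hL
    have hPB2 : (P Bad2).toReal ≤ 32 / Real.log n := by
      have hch := measure_ge_le_exp_mul_mgf (X := fun ω => ∑ i : Fin n, ind i ω) (μ := P)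
        (Real.sqrt L) (by norm_num : (0:ℝ) ≤ 1) (by simpa using hNexpint 1)
      have hmgf1 : mgf (fun ω => ∑ i : Fin n, ind i ω) P 1 ≤ Real.exp 2 := by
        rw [hmgfN]
        have hfac : ∀ i : Fin n, mgf (ind i) P 1 ≤ Real.exp (2 * q i) := by
          intro i
          have hptw : ∀ ω, Real.exp (1 * ind i ω) ≤ 1 + 2 * ind i ω := by
            intro ω
            have he1 : Real.exp 1 ≤ 3 := by
              have := Real.exp_one_lt_d9
              linarith
            by_cases h : 2 * B < ‖X i ω‖ <;> simp [hinddef, h] <;> linarith only [he1]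
          have h1 : mgf (ind i) P 1 ≤ 1 + 2 * q i := by
            calc mgf (ind i) P 1 = ∫ ω, Real.exp (1 * ind i ω) ∂P := rfl
              _ ≤ ∫ ω, (1 + 2 * ind i ω) ∂P :=
                  integral_mono (hindexpint 1 i)
                    ((integrable_const 1).add ((hindint i).const_mul 2)) hptw
              _ = 1 + 2 * q i := by
                  rw [integral_add (integrable_const 1) ((hindint i).const_mul 2),
                    MeasureTheory.integral_const_mul]
                  simp [hqdef]
          refine le_trans h1 ?_
          have h2' := Real.add_one_le_exp (2 * q i)
          linarith only [h2']
        calc ∏ i : Fin n, mgf (ind i) P 1 ≤ ∏ i : Fin n, Real.exp (2 * q i) :=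
              Finset.prod_le_prod (fun i _ => mgf_nonneg) fun i _ => hfac i
          _ = Real.exp (∑ i : Fin n, 2 * q i) := (Real.exp_sum _ _).symm
          _ ≤ Real.exp 2 := by
              refine Real.exp_le_exp.mpr ?_
              rw [← Finset.mul_sum]
              linarith only [hqsum]
      have hexpsqrt : Real.exp (-(Real.sqrt L)) ≤ 4 / L := by
        have h1 : Real.sqrt L / 2 + 1 ≤ Real.exp (Real.sqrt L / 2) := by
          have h := Real.add_one_le_exp (Real.sqrt L / 2)
          linarith only [h]
        have h2 : (Real.sqrt L / 2) ^ 2 ≤ (Real.exp (Real.sqrt L / 2)) ^ 2 := by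
          refine pow_le_pow_left₀ (by positivity) ?_ 2
          linarith only [h1]
        have h3 : (Real.exp (Real.sqrt L / 2)) ^ 2 = Real.exp (Real.sqrt L) := by
          rw [sq, ← Real.exp_add]
          congr 1
          ring
        have h4 : L / 4 ≤ Real.exp (Real.sqrt L) := by
          have h5 : (Real.sqrt L / 2) ^ 2 = L / 4 := by
            rw [div_pow, Real.sq_sqrt hL.le]
            norm_num
          rw [← h5, ← h3]
          exact h2
        rw [Real.exp_neg]
        have h6 : (Real.exp (Real.sqrt L))⁻¹ ≤ (L/4)⁻¹ := by
          refine inv_anti₀ (by positivity) h4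
        rw [inv_div] at h6
        exact h6
      have hexp28 : Real.exp 2 ≤ 8 := by
        have h1 : Real.exp 2 = Real.exp 1 * Real.exp 1 := by rw [← Real.exp_add]; norm_num
        have h2 := Real.exp_one_lt_d9
        have h3 := Real.exp_pos 1
        rw [h1]
        nlinarith only [h2, h3]
      have hL32 : 32 / L ≤ 32 / Real.log n := hdivmono 32 _ _ (by norm_num) hlogn hLlogn
      calc (P Bad2).toReal
          ≤ Real.exp (-1 * Real.sqrt L) * mgf (fun ω => ∑ i : Fin n, ind i ω) P 1 := hch
        _ ≤ Real.exp (-(Real.sqrt L)) * Real.exp 2 := by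
            rw [show (-1 : ℝ) * Real.sqrt L = -(Real.sqrt L) by ring]
            exact mul_le_mul_of_nonneg_left hmgf1 (Real.exp_pos _).le
        _ ≤ (4 / L) * 8 := by
            refine mul_le_mul hexpsqrt hexp28 (Real.exp_pos _).le (by positivity)
        _ = 32 / L := by ring
        _ ≤ 32 / Real.log n := hL32
    -- probability of Bad3
    have hPB3 : (P Bad3).toReal ≤ 1 / Real.log n := by
      have hsub3 : Bad3 ⊆ {ω | τ2 ^ 2 ≤ S ω} := by
        intro ω hω
        obtain ⟨i, hi⟩ := Set.mem_iUnion.mp hω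
        have h1 : τ2 ≤ ‖X i ω‖ := hi
        have h2 : τ2 ^ 2 ≤ ‖X i ω‖ ^ 2 := pow_le_pow_left₀ hτ2pos.le h1 2
        exact le_trans h2 (hS_ge i ω)
      have hm := hmarkov (τ2 ^ 2) (by positivity)
      refine le_trans (ENNReal.toReal_mono (measure_ne_top P _) (measure_mono hsub3)) ?_
      refine le_trans hm ?_
      have hτ2sq : B ^ 2 * L ≤ τ2 ^ 2 := by
        have h2 : (B * Real.sqrt L) ^ 2 ≤ τ2 ^ 2 := pow_le_pow_left₀ (by positivity) hτ2BL 2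
        calc B ^ 2 * L = (B * Real.sqrt L) ^ 2 := by rw [mul_pow, Real.sq_sqrt hL.le]
          _ ≤ τ2 ^ 2 := h2
      have h3 : B ^ 2 / τ2 ^ 2 ≤ 1 / L := by
        rw [div_le_div_iff₀ (by positivity) hL]
        calc B ^ 2 * L ≤ τ2 ^ 2 := hτ2sq
          _ = 1 * τ2 ^ 2 := by ring
      exact le_trans h3 (hdivmono 1 _ _ (by norm_num) hlogn hLlogn)
    -- total bad probability
    have hPBad : (P Bad).toReal ≤ 100 / Real.log n := by
      have h1 : P Bad ≤ P Bad1 + P Bad2 + P Bad3 := by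
        calc P Bad ≤ P (Bad1 ∪ Bad2) + P Bad3 := measure_union_le _ _
          _ ≤ P Bad1 + P Bad2 + P Bad3 :=
              add_le_add (measure_union_le _ _) le_rfl
      have hne : (P Bad1 + P Bad2 + P Bad3) ≠ (⊤ : ℝ≥0∞) := by
        refine (ENNReal.add_lt_top.mpr ⟨ENNReal.add_lt_top.mpr
          ⟨measure_lt_top P _, measure_lt_top P _⟩, measure_lt_top P _⟩).ne
      have h2 : (P Bad).toReal ≤ (P Bad1).toReal + (P Bad2).toReal + (P Bad3).toReal := by
        refine le_trans (ENNReal.toReal_mono hne h1) ?_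
        rw [ENNReal.toReal_add (ENNReal.add_lt_top.mpr
          ⟨measure_lt_top P _, measure_lt_top P _⟩).ne (measure_ne_top P _),
          ENNReal.toReal_add (measure_ne_top P _) (measure_ne_top P _)]
      have h3 : 2 / Real.log n + 32 / Real.log n + 1 / Real.log n ≤ 100 / Real.log n := by
        rw [← add_div, ← add_div]
        rw [div_le_div_iff₀ hlogn hlogn]
        have : (2:ℝ) + 32 + 1 ≤ 100 := by norm_num
        exact mul_le_mul_of_nonneg_right this hlogn.le
      linarith only [h2, h3, hPB1, hPB2, hPB3]
    -- the deterministic inclusion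
    have hincl : Badᶜ ⊆ {ω | (⨆ j : Fin p, |(n : ℝ)⁻¹ *
          ∑ i : Fin n, (|X i ω j| - ∫ ω', |X i ω' j| ∂P)|)
        ≤ 100 * (Real.sqrt (σ2 * L / n) + B * L / n)} := by
      intro ω hω
      have hω' : ω ∉ Bad1 ∧ ω ∉ Bad2 ∧ ω ∉ Bad3 := by
        rw [hBaddef] at hω
        simp only [Set.mem_compl_iff, Set.mem_union, not_or] at hω
        exact ⟨hω.1.1, hω.1.2, hω.2⟩
      obtain ⟨hω1, hω2, hω3⟩ := hω'
      have hUV : ∀ j : Fin p, |∑ i : Fin n, ξ j i ω| ≤ s := by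
        intro j
        have h1 : ω ∉ U j ∪ V j := fun hmem => hω1 (Set.mem_iUnion.mpr ⟨j, hmem⟩)
        have h2 : ¬ (s ≤ ∑ i : Fin n, ξ j i ω) := fun hs' => h1 (Or.inl hs')
        have h3 : ¬ (s ≤ ∑ i : Fin n, -(ξ j i ω)) := fun hs' => h1 (Or.inr hs')
        push_neg at h2 h3
        have h4 : ∑ i : Fin n, -(ξ j i ω) = -∑ i : Fin n, ξ j i ω := by
          rw [Finset.sum_neg_distrib]
        rw [h4] at h3
        rw [abs_le]
        constructor
        · linarith only [h3]
        · linarith only [h2]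
      have hNlt : ∑ i : Fin n, ind i ω ≤ Real.sqrt L := by
        have h1 : ω ∉ Bad2 := hω2
        rw [hBad2def] at h1
        simp only [Set.mem_setOf_eq, not_le] at h1
        exact h1.le
      have hY : ∀ i : Fin n, ‖X i ω‖ < τ2 := by
        intro i
        have h1 : ω ∉ {ω | τ2 ≤ ‖X i ω‖} := fun h => hω3 (Set.mem_iUnion.mpr ⟨i, h⟩)
        exact not_le.mp fun hle => h1 hle
      simp only [Set.mem_setOf_eq]
      refine ciSup_le fun j => ?_
      have hb2meas : ∀ i : Fin n, Measurable (fun ω' => min |X i ω' j| τ2) := fun i =>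
        (hmeasXij i j).abs.min measurable_const
      have hb2bd : ∀ (i : Fin n) (ω' : Ω), |min |X i ω' j| τ2| ≤ τ2 := by
        intro i ω'
        rw [abs_of_nonneg (le_min (abs_nonneg _) hτ2pos.le)]
        exact min_le_right _ _
      have hb2int : ∀ i : Fin n, Integrable (fun ω' => min |X i ω' j| τ2) P := fun i =>
        fn_integrable_of_bounded (hb2meas i).aestronglyMeasurable τ2 (hb2bd i)
      set ev : Fin n → ℝ := fun i => ∫ ω', (min |X i ω' j| τ2 - a i j ω') ∂P with hevdef
      set ew : Fin n → ℝ := fun i => ∫ ω', (|X i ω' j| - min |X i ω' j| τ2) ∂P with hewdef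
      have hM : ∀ i : Fin n, ∫ ω', |X i ω' j| ∂P = mm i j + ev i + ew i := by
        intro i
        have h1 : ev i = (∫ ω', min |X i ω' j| τ2 ∂P) - mm i j :=
          integral_sub (hb2int i) (haint i j)
        have h2 : ew i = (∫ ω', |X i ω' j| ∂P) - ∫ ω', min |X i ω' j| τ2 ∂P :=
          integral_sub (habsint i j) (hb2int i)
        rw [h1, h2]; ring
      have hsum : ∑ i : Fin n, (|X i ω j| - ∫ ω', |X i ω' j| ∂P)
          = (∑ i : Fin n, ξ j i ω)
            + ((∑ i : Fin n, (min |X i ω j| τ2 - a i j ω)) - ∑ i : Fin n, ev i)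
            + ((∑ i : Fin n, (|X i ω j| - min |X i ω j| τ2)) - ∑ i : Fin n, ew i) := by
        rw [← Finset.sum_sub_distrib, ← Finset.sum_sub_distrib, ← Finset.sum_add_distrib,
          ← Finset.sum_add_distrib]
        refine Finset.sum_congr rfl fun i _ => ?_
        rw [hM i, hξeq]
        ring
      have hvv_nonneg : ∀ i : Fin n, 0 ≤ min |X i ω j| τ2 - a i j ω := by
        intro i
        have h1 : a i j ω ≤ min |X i ω j| τ2 := min_le_min (le_refl _) hτ12
        linarith only [h1]
      have hvv_sum : ∑ i : Fin n, (min |X i ω j| τ2 - a i j ω) ≤ B * L := by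
        rcases le_or_gt (B * Real.sqrt L) τ1 with hcase | hcase
        · have hττ : τ2 = τ1 := max_eq_left hcase
          have hz : ∀ i : Fin n, min |X i ω j| τ2 - a i j ω = 0 := by
            intro i
            rw [hττ]
            exact sub_self _
          rw [Finset.sum_congr rfl fun i _ => hz i, Finset.sum_const, smul_zero]
          positivity
        · have hττ : τ2 = B * Real.sqrt L := max_eq_right hcase.le
          have hper : ∀ i : Fin n,
              min |X i ω j| τ2 - a i j ω ≤ (B * Real.sqrt L) * ind i ω := by
            intro i
            by_cases hYi : 2 * B < ‖X i ω‖
            · have hind1 : ind i ω = 1 := by simp [hinddef, hYi]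
              rw [hind1, mul_one, ← hττ]
              have h1 := ha_nonneg i j ω
              have h2 := min_le_right |X i ω j| τ2
              linarith only [h1, h2]
            · have hind0 : ind i ω = 0 := by simp [hinddef, hYi]
              rw [hind0, mul_zero]
              have hx : |X i ω j| ≤ τ1 :=
                le_trans (le_trans (hcoord i j ω) (not_lt.mp hYi)) hτ1B
              have h1 : a i j ω = |X i ω j| := min_eq_left hx
              have h2 : min |X i ω j| τ2 = |X i ω j| := min_eq_left (le_trans hx hτ12)
              rw [h1, h2]
              simp
          calc ∑ i : Fin n, (min |X i ω j| τ2 - a i j ω)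
              ≤ ∑ i : Fin n, (B * Real.sqrt L) * ind i ω :=
                Finset.sum_le_sum fun i _ => hper i
            _ = (B * Real.sqrt L) * ∑ i : Fin n, ind i ω := by rw [Finset.mul_sum]
            _ ≤ (B * Real.sqrt L) * Real.sqrt L :=
                mul_le_mul_of_nonneg_left hNlt (by positivity)
            _ = B * L := by rw [mul_assoc, Real.mul_self_sqrt hL.le]
      have hquad : ∀ (i : Fin n), Integrable (fun ω' => (X i ω' j) ^ 2 / τ1) P :=
        fun i => (hXsqint i j).div_const τ1
      have hev_nonneg : ∀ i : Fin n, 0 ≤ ev i := by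
        intro i
        refine integral_nonneg fun ω' => ?_
        have h1 : a i j ω' ≤ min |X i ω' j| τ2 := min_le_min (le_refl _) hτ12
        simp only [Pi.zero_apply]
        linarith only [h1]
      have hev_le : ∀ i : Fin n, ev i ≤ (∫ ω', (X i ω' j) ^ 2 ∂P) / τ1 := by
        intro i
        have h1 : ev i ≤ ∫ ω', (X i ω' j) ^ 2 / τ1 ∂P := by
          refine integral_mono ((hb2int i).sub (haint i j)) (hquad i) fun ω' => ?_
          show min |X i ω' j| τ2 - a i j ω' ≤ (X i ω' j) ^ 2 / τ1
          have h2 := fn_mid_sq (x := |X i ω' j|) (τ := τ1) (τ' := τ2) hτ1pos (abs_nonneg _) hτ12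
          rwa [sq_abs] at h2
        rwa [integral_div] at h1
      have hew_nonneg : ∀ i : Fin n, 0 ≤ ew i := by
        intro i
        refine integral_nonneg fun ω' => ?_
        have h1 := min_le_left |X i ω' j| τ2
        simp only [Pi.zero_apply]
        linarith only [h1]
      have hew_le : ∀ i : Fin n, ew i ≤ (∫ ω', (X i ω' j) ^ 2 ∂P) / τ1 := by
        intro i
        have h1 : ew i ≤ ∫ ω', (X i ω' j) ^ 2 / τ1 ∂P := by
          refine integral_mono ((habsint i j).sub (hb2int i)) (hquad i) fun ω' => ?_
          show |X i ω' j| - min |X i ω' j| τ2 ≤ (X i ω' j) ^ 2 / τ1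
          have h2 := fn_top_sq (x := |X i ω' j|) (τ := τ2) hτ2pos (abs_nonneg _)
          rw [sq_abs] at h2
          exact le_trans h2 (hdivmono _ _ _ (sq_nonneg _) hτ1pos hτ12)
        rwa [integral_div] at h1
      have hsum_div : ∑ i : Fin n, (∫ ω', (X i ω' j) ^ 2 ∂P) / τ1 ≤ K := by
        rw [← Finset.sum_div]
        have h2 : ((n:ℝ) * σ2) / τ1 ≤ K := by
          rw [div_le_iff₀ hτ1pos]
          have h3 : A * K ≤ τ1 * K := mul_le_mul_of_nonneg_right hτ1A hKpos.le
          calc (n:ℝ) * σ2 ≤ A * K := hfact2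
            _ ≤ τ1 * K := h3
            _ = K * τ1 := mul_comm _ _
        exact le_trans (hdivnum _ _ _ (hsumsq j) hτ1pos) h2
      have hev_sum : ∑ i : Fin n, ev i ≤ K :=
        le_trans (Finset.sum_le_sum fun i _ => hev_le i) hsum_div
      have hew_sum : ∑ i : Fin n, ew i ≤ K :=
        le_trans (Finset.sum_le_sum fun i _ => hew_le i) hsum_div
      have hww0 : ∑ i : Fin n, (|X i ω j| - min |X i ω j| τ2) = 0 := by
        refine Finset.sum_eq_zero fun i _ => ?_
        have h1 : |X i ω j| ≤ τ2 := le_trans (hcoord i j ω) (hY i).le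
        rw [min_eq_left h1]
        exact sub_self _
      have hvvs_nonneg : 0 ≤ ∑ i : Fin n, (min |X i ω j| τ2 - a i j ω) :=
        Finset.sum_nonneg fun i _ => hvv_nonneg i
      have hevs_nonneg : 0 ≤ ∑ i : Fin n, ev i := Finset.sum_nonneg fun i _ => hev_nonneg i
      have hews_nonneg : 0 ≤ ∑ i : Fin n, ew i := Finset.sum_nonneg fun i _ => hew_nonneg i
      have htotal : |∑ i : Fin n, (|X i ω j| - ∫ ω', |X i ω' j| ∂P)| ≤ 10 * (K + B * L) := by
        rw [hsum]
        have t1 : |∑ i : Fin n, ξ j i ω| ≤ s := hUV j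
        have t2 : |(∑ i : Fin n, (min |X i ω j| τ2 - a i j ω)) - ∑ i : Fin n, ev i|
            ≤ B * L + K := by
          rw [abs_le]
          constructor
          · linarith only [hvvs_nonneg, hev_sum, hBLnn]
          · linarith only [hvv_sum, hevs_nonneg, hKpos.le]
        have t3 : |(∑ i : Fin n, (|X i ω j| - min |X i ω j| τ2)) - ∑ i : Fin n, ew i|
            ≤ K := by
          rw [hww0, zero_sub, abs_neg, abs_of_nonneg hews_nonneg]
          exact hew_sum
        have habs3 := abs_add_three (∑ i : Fin n, ξ j i ω)
          ((∑ i : Fin n, (min |X i ω j| τ2 - a i j ω)) - ∑ i : Fin n, ev i)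
          ((∑ i : Fin n, (|X i ω j| - min |X i ω j| τ2)) - ∑ i : Fin n, ew i)
        have hsval : s = 8 * (K + B * L) := hsdef
        linarith only [habs3, t1, t2, t3, hsval, hBLnn, hKpos.le]
      have hKn : K / (n:ℝ) = Real.sqrt (σ2 * L / (n:ℝ)) := by
        rw [hfact3]
        field_simp
      have habs : |(n:ℝ)⁻¹ * ∑ i : Fin n, (|X i ω j| - ∫ ω', |X i ω' j| ∂P)|
          = (n:ℝ)⁻¹ * |∑ i : Fin n, (|X i ω j| - ∫ ω', |X i ω' j| ∂P)| := by
        rw [abs_mul, abs_of_nonneg (by positivity : (0:ℝ) ≤ (n:ℝ)⁻¹)]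
      rw [habs]
      have hfin : (n:ℝ)⁻¹ * (10 * (K + B * L))
          ≤ 100 * (Real.sqrt (σ2 * L / (n:ℝ)) + B * L / (n:ℝ)) := by
        have he : (n:ℝ)⁻¹ * (10 * (K + B * L)) = 10 * (K / (n:ℝ)) + 10 * (B * L / (n:ℝ)) := by
          field_simp
        rw [he, hKn]
        have h1 : 0 ≤ Real.sqrt (σ2 * L / (n:ℝ)) := Real.sqrt_nonneg _
        have h2 : 0 ≤ B * L / (n:ℝ) := by positivity
        linarith only [h1, h2]
      exact le_trans (mul_le_mul_of_nonneg_left htotal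
        (by positivity : (0:ℝ) ≤ (n:ℝ)⁻¹)) hfin

    -- conclusion
    have hcompl : (P Badᶜ).toReal = 1 - (P Bad).toReal := by
      have hsplit : (P Bad).toReal + (P Badᶜ).toReal = 1 := by
        rw [← ENNReal.toReal_add (measure_ne_top P _) (measure_ne_top P _),
          measure_add_measure_compl hBadmeas, measure_univ, ENNReal.toReal_one]
      linarith only [hsplit]
    have hmono2 : (P Badᶜ).toReal ≤ (P {ω | (⨆ j : Fin p, |(n : ℝ)⁻¹ *
          ∑ i : Fin n, (|X i ω j| - ∫ ω', |X i ω' j| ∂P)|)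
        ≤ 100 * (Real.sqrt (σ2 * L / n) + B * L / n)}).toReal :=
      ENNReal.toReal_mono (measure_ne_top P _) (measure_mono hincl)
    linarith only [hPBad, hcompl, hmono2]


  · -- degenerate case : all coordinates vanish a.s.
    push_neg at hσ2pos
    have hzero : ∀ i j, ∫ ω, (X i ω j) ^ 2 ∂P = 0 := by
      intro i j
      have h1 := hσ2_ge j
      have hterm : ∀ i' : Fin n, 0 ≤ ∫ ω, (X i' ω j) ^ 2 ∂P := fun i' =>
        integral_nonneg fun ω => sq_nonneg _
      have hsumnn : 0 ≤ ∑ i' : Fin n, ∫ ω, (X i' ω j) ^ 2 ∂P :=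
        Finset.sum_nonneg fun i' _ => hterm i'
      have hsum0 : ∑ i' : Fin n, ∫ ω, (X i' ω j) ^ 2 ∂P = 0 := by
        have : (n:ℝ)⁻¹ * ∑ i' : Fin n, ∫ ω, (X i' ω j) ^ 2 ∂P ≤ 0 := le_trans h1 hσ2pos
        nlinarith [inv_pos.mpr hn0]
      have := (Finset.sum_eq_zero_iff_of_nonneg (fun i' _ => hterm i')).mp hsum0 i (Finset.mem_univ i)
      exact this
    have hae : ∀ᵐ ω ∂P, ∀ i j, X i ω j = 0 := by
      rw [ae_all_iff]
      intro i
      rw [ae_all_iff]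
      intro j
      have h0 : (fun ω => (X i ω j) ^ 2) =ᵐ[P] 0 :=
        (integral_eq_zero_iff_of_nonneg (fun ω => sq_nonneg _) (hXsqint i j)).mp (hzero i j)
      filter_upwards [h0] with ω hω
      exact pow_eq_zero_iff (by norm_num) |>.mp hω
    have hM0 : ∀ i j, ∫ ω', |X i ω' j| ∂P = 0 := by
      intro i j
      have : (fun ω' => |X i ω' j|) =ᵐ[P] 0 := by
        filter_upwards [hae] with ω hω
        simp [hω i j]
      exact integral_eq_zero_of_ae this
    set T : Set Ω := {ω | ∀ i j, X i ω j = 0} with hT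
    have hsub : T ⊆ {ω | (⨆ j : Fin p, |(n : ℝ)⁻¹ *
          ∑ i : Fin n, (|X i ω j| - ∫ ω', |X i ω' j| ∂P)|)
        ≤ 100 * (Real.sqrt (σ2 * L / n) + B * L / n)} := by
      intro ω hω
      simp only [Set.mem_setOf_eq]
      refine ciSup_le fun j => ?_
      have : ∀ i : Fin n, |X i ω j| - ∫ ω', |X i ω' j| ∂P = 0 := by
        intro i; rw [hM0 i j, hω i j]; simp
      rw [Finset.sum_congr rfl fun i _ => this i]
      simp [hRnn]
      positivity
    have hPT : 1 ≤ P T := by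
      have hTc : P Tᶜ = 0 := by
        have := MeasureTheory.ae_iff.mp hae
        simpa [hT, Set.compl_setOf] using this
      calc (1:ℝ≥0∞) = P Set.univ := (measure_univ).symm
        _ ≤ P T + P Tᶜ := by
            rw [← Set.union_compl_self T] at *
            exact measure_union_le _ _
        _ = P T := by rw [hTc, add_zero]
    have : P {ω | (⨆ j : Fin p, |(n : ℝ)⁻¹ *
          ∑ i : Fin n, (|X i ω j| - ∫ ω', |X i ω' j| ∂P)|)
        ≤ 100 * (Real.sqrt (σ2 * L / n) + B * L / n)} = 1 := by
      refine le_antisymm prob_le_one (le_trans hPT (measure_mono hsub))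
    rw [this]
    simp only [ENNReal.toReal_one]
    have : 0 ≤ 100 / Real.log n := by positivity
    linarith
end
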